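/- arXiv:2305.11780 — 5 statements merged into one kernel-verified Lean document; each statement's English description precedes it below -/
import Mathlib

section
/- Let d ≥ 2, let E1, E2 be transverse complete flags of ℂ^d, and let (w_i)_{i∈A} be a family of nonzero complex numbers. Then there exists c ∈ GL_d(ℂ) preserving both flags E1 and E2 such that, for all complete flags F and G with (E1,E2,F) and (E1,E2,G) in general position, the triple (E1,E2,c·G) is in general position and D^i(E1,E2,F,c·G) = w_i·D^i(E1,E2,F,G) for every i ∈ A. Moreover, any two elements of GL_d(ℂ) with these properties differ by multiplication by a nonzero scalar. -/
noncomputable section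

/-- A complete flag of `ℂ^d`: an increasing chain of subspaces `F 0 ⊆ F 1 ⊆ ⋯` of `ℂ^d`
with `dim (F k) = k` for all `k ≤ d`. -/
def IsCompleteFlag (d : ℕ) (F : ℕ → Submodule ℂ (Fin d → ℂ)) : Prop :=
  Monotone F ∧ ∀ k, k ≤ d → Module.finrank ℂ ↥(F k) = k

/-- Two complete flags of `ℂ^d` are transverse: `F^k + G^(d-k) = ℂ^d` for all `k`. -/
def TransverseFlags (d : ℕ) (F G : ℕ → Submodule ℂ (Fin d → ℂ)) : Prop :=
  ∀ k, k ≤ d → F k ⊔ G (d - k) = ⊤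

/-- The flag `g · F`, whose subspaces are the images `g (F k)`. -/
def flagMap (d : ℕ) (g : Matrix (Fin d) (Fin d) ℂ) (F : ℕ → Submodule ℂ (Fin d → ℂ)) :
    ℕ → Submodule ℂ (Fin d → ℂ) :=
  fun k => Submodule.map g.mulVecLin (F k)

/-- A triple of flags of `ℂ^d` in general position:
`F1^k1 + F2^k2 + F3^k3 = ℂ^d` whenever `k1 + k2 + k3 = d`. -/
def GenPos3 (d : ℕ) (F1 F2 F3 : ℕ → Submodule ℂ (Fin d → ℂ)) : Prop :=
  ∀ k1 k2 k3 : ℕ, k1 + k2 + k3 = d → F1 k1 ⊔ F2 k2 ⊔ F3 k3 = ⊤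

/-- The index set `B`: triples of positive integers summing to `d`. -/
def memB (d : ℕ) (j : ℕ × ℕ × ℕ) : Prop :=
  0 < j.1 ∧ 0 < j.2.1 ∧ 0 < j.2.2 ∧ j.1 + j.2.1 + j.2.2 = d

/-- The index set `A`: pairs of positive integers summing to `d`. -/
def memA (d : ℕ) (i : ℕ × ℕ) : Prop :=
  0 < i.1 ∧ 0 < i.2 ∧ i.1 + i.2 = d

/-- `v 0, v 1, …, v (d-1)` is a basis adapted to the flag `F`: for every `k ≤ d`, the
subspace `F k` is spanned by the first `k` vectors.  A nonzero element `f^k` of the line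
`⋀^k F^k` is then given by `v 0 ∧ ⋯ ∧ v (k-1)`. -/
def IsAdaptedBasis (d : ℕ) (F : ℕ → Submodule ℂ (Fin d → ℂ)) (v : ℕ → Fin d → ℂ) : Prop :=
  ∀ k, k ≤ d → F k = Submodule.span ℂ (v '' {m | m < k})

/-- A choice of adapted basis for a flag. -/
noncomputable def flagBasis (d : ℕ) (F : ℕ → Submodule ℂ (Fin d → ℂ)) : ℕ → Fin d → ℂ :=
  Classical.epsilon (IsAdaptedBasis d F)

/-- The scalar `f1^a ∧ f2^b ∧ f3^(d-a-b)`: the wedge product of the first `a` vectors of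
`v1`, the first `b` vectors of `v2` and the first `d - a - b` vectors of `v3`, viewed as a
complex number via the determinant (i.e. via the standard identification `⋀^d ℂ^d ≅ ℂ`). -/
noncomputable def wedgeDet (d a b : ℕ) (v1 v2 v3 : ℕ → Fin d → ℂ) : ℂ :=
  Matrix.det (Matrix.of fun (i j : Fin d) =>
    if (i : ℕ) < a then v1 (i : ℕ) j
    else if (i : ℕ) < a + b then v2 ((i : ℕ) - a) j
    else v3 ((i : ℕ) - a - b) j)

/-- The triple ratio `T^j(F1,F2,F3)` of a triple of flags in general position,
for `j = (j1,j2,j3)` with `j1 + j2 + j3 = d`. -/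
noncomputable def tripleRatio (d : ℕ) (j : ℕ × ℕ × ℕ)
    (F1 F2 F3 : ℕ → Submodule ℂ (Fin d → ℂ)) : ℂ :=
  (wedgeDet d (j.1 + 1) j.2.1 (flagBasis d F1) (flagBasis d F2) (flagBasis d F3) *
      wedgeDet d j.1 (j.2.1 - 1) (flagBasis d F1) (flagBasis d F2) (flagBasis d F3) *
      wedgeDet d (j.1 - 1) (j.2.1 + 1) (flagBasis d F1) (flagBasis d F2) (flagBasis d F3)) /
    (wedgeDet d (j.1 - 1) j.2.1 (flagBasis d F1) (flagBasis d F2) (flagBasis d F3) *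
      wedgeDet d j.1 (j.2.1 + 1) (flagBasis d F1) (flagBasis d F2) (flagBasis d F3) *
      wedgeDet d (j.1 + 1) (j.2.1 - 1) (flagBasis d F1) (flagBasis d F2) (flagBasis d F3))

/-- A choice of nonzero vector in a (1-dimensional) subspace. -/
noncomputable def lineVec (d : ℕ) (l : Submodule ℂ (Fin d → ℂ)) : Fin d → ℂ :=
  Classical.epsilon fun v => v ∈ l ∧ v ≠ 0

/-- The double ratio `D^i(G1,G2,ℓ1,ℓ2)` of a pair of transverse flags and a pair of lines,
for `i = (i1,i2)` with `i1 + i2 = d`. -/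
noncomputable def doubleRatioLine (d : ℕ) (i : ℕ × ℕ) (G1 G2 : ℕ → Submodule ℂ (Fin d → ℂ))
    (l1 l2 : Submodule ℂ (Fin d → ℂ)) : ℂ :=
  -((wedgeDet d i.1 (i.2 - 1) (flagBasis d G1) (flagBasis d G2) (fun _ => lineVec d l1) *
        wedgeDet d (i.1 - 1) i.2 (flagBasis d G1) (flagBasis d G2) (fun _ => lineVec d l2)) /
      (wedgeDet d i.1 (i.2 - 1) (flagBasis d G1) (flagBasis d G2) (fun _ => lineVec d l2) *
        wedgeDet d (i.1 - 1) i.2 (flagBasis d G1) (flagBasis d G2) (fun _ => lineVec d l1)))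

/-- The double ratio `D^i(G1,G2,H1,H2)` of four flags, which only depends on the
`1`-dimensional parts of `H1` and `H2`. -/
noncomputable def doubleRatio (d : ℕ) (i : ℕ × ℕ)
    (G1 G2 H1 H2 : ℕ → Submodule ℂ (Fin d → ℂ)) : ℂ :=
  doubleRatioLine d i G1 G2 (H1 1) (H2 1)

/-- The defining properties of the complex shear associated to `(E1, E2)` and the family of
nonzero scalars `w`: it is invertible, preserves both flags, and rescales the double ratio
`D^i(E1,E2,F,·G)` by `w i` for all flags `F`, `G` in general position with `(E1,E2)`. -/
def ShearProp (d : ℕ) (E1 E2 : ℕ → Submodule ℂ (Fin d → ℂ)) (w : ℕ × ℕ → ℂ)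
    (c : Matrix (Fin d) (Fin d) ℂ) : Prop :=
  IsUnit c ∧ flagMap d c E1 = E1 ∧ flagMap d c E2 = E2 ∧
    ∀ F G : ℕ → Submodule ℂ (Fin d → ℂ), IsCompleteFlag d F → IsCompleteFlag d G →
      GenPos3 d E1 E2 F → GenPos3 d E1 E2 G →
      GenPos3 d E1 E2 (flagMap d c G) ∧
        ∀ i : ℕ × ℕ, memA d i →
          doubleRatio d i E1 E2 F (flagMap d c G) = w i * doubleRatio d i E1 E2 F G


namespace ShearAux

open Submodule Module

variable {d : ℕ}

lemma finrank_pi_fin : finrank ℂ (Fin d → ℂ) = d := by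
  simp [Module.finrank_pi]

lemma step_lemma {p q : Submodule ℂ (Fin d → ℂ)} {x : Fin d → ℂ}
    (hpq : p ≤ q) (hx : x ∈ q) (hxp : x ∉ p)
    (hfin : finrank ℂ q ≤ finrank ℂ p + 1) : q = p ⊔ span ℂ {x} := by
  have hx0 : x ≠ 0 := fun h => hxp (h ▸ p.zero_mem)
  have hinf : p ⊓ span ℂ {x} = ⊥ := by
    rw [eq_bot_iff]
    rintro y ⟨hyp, hys⟩
    rcases mem_span_singleton.1 hys with ⟨a, rfl⟩
    rcases eq_or_ne a 0 with rfl | ha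
    · simp
    · refine absurd ?_ hxp
      have := p.smul_mem a⁻¹ hyp
      rwa [smul_smul, inv_mul_cancel₀ ha, one_smul] at this
  have hsum : finrank ℂ ↥(p ⊔ span ℂ {x}) = finrank ℂ p + 1 := by
    have := Submodule.finrank_sup_add_finrank_inf_eq p (span ℂ {x})
    rw [hinf, finrank_bot, finrank_span_singleton hx0] at this
    omega
  refine (Submodule.eq_of_le_of_finrank_le (sup_le hpq (span_le.2 (by simpa using hx))) ?_).symm
  omega

lemma flag_top {F : ℕ → Submodule ℂ (Fin d → ℂ)} (hF : IsCompleteFlag d F) {k : ℕ}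
    (hk : d ≤ k) : F k = ⊤ := by
  have hd : F d = ⊤ := Submodule.eq_top_of_finrank_eq (by rw [hF.2 d le_rfl, finrank_pi_fin])
  exact top_le_iff.1 (hd ▸ hF.1 hk)

lemma exists_adapted {F : ℕ → Submodule ℂ (Fin d → ℂ)} (hF : IsCompleteFlag d F) :
    ∃ v, IsAdaptedBasis d F v := by
  have hstep : ∀ k, k < d → ∃ x, x ∈ F (k + 1) ∧ x ∉ F k := by
    intro k hk
    have hlt : F k < F (k + 1) := by
      refine lt_of_le_of_ne (hF.1 (Nat.le_succ k)) fun h => ?_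
      have := hF.2 k hk.le
      rw [h, hF.2 (k+1) hk] at this
      omega
    rcases SetLike.exists_of_lt hlt with ⟨x, hx1, hx2⟩
    exact ⟨x, hx1, hx2⟩
  classical
  refine ⟨fun k => if h : k < d then Classical.choose (hstep k h) else 0, ?_⟩
  intro k hk
  induction k with
  | zero =>
    have : F 0 = ⊥ := Submodule.finrank_eq_zero.1 (hF.2 0 (Nat.zero_le d))
    simp [this, Set.eq_empty_iff_forall_notMem]
  | succ k ih =>
    have hkd : k < d := hk
    obtain ⟨hx1, hx2⟩ := Classical.choose_spec (hstep k hkd)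
    have heq : F (k+1) = F k ⊔ span ℂ {Classical.choose (hstep k hkd)} := by
      refine step_lemma (hF.1 (Nat.le_succ k)) hx1 hx2 ?_
      rw [hF.2 k hkd.le, hF.2 (k+1) hk]
    set f : ℕ → Fin d → ℂ := fun k => if h : k < d then Classical.choose (hstep k h) else 0 with hf
    have hset : f '' {m | m < k + 1} = insert (f k) (f '' {m | m < k}) := by
      have h1 : {m | m < k + 1} = insert k {m | m < k} := by
        ext m; simp only [Set.mem_setOf_eq, Set.mem_insert_iff]; omega
      rw [h1, Set.image_insert_eq]
    have hfk : f k = Classical.choose (hstep k hkd) := by simp [hf, hkd]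
    rw [heq, hset, hfk, span_insert, sup_comm, ← ih hkd.le]

lemma flagBasis_adapted {F : ℕ → Submodule ℂ (Fin d → ℂ)} (hF : IsCompleteFlag d F) :
    IsAdaptedBasis d F (flagBasis d F) :=
  Classical.epsilon_spec (exists_adapted hF)

lemma lineVec_spec {l : Submodule ℂ (Fin d → ℂ)} (hl : l ≠ ⊥) :
    lineVec d l ∈ l ∧ lineVec d l ≠ 0 :=
  Classical.epsilon_spec (Submodule.exists_mem_ne_zero_of_ne_bot hl)

lemma ne_bot_of_finrank_one {l : Submodule ℂ (Fin d → ℂ)} (hl : finrank ℂ l = 1) : l ≠ ⊥ := by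
  intro h; rw [h, finrank_bot] at hl; omega

lemma span_lineVec {l : Submodule ℂ (Fin d → ℂ)} (hl : finrank ℂ l = 1) :
    span ℂ {lineVec d l} = l := by
  obtain ⟨hm, h0⟩ := lineVec_spec (ne_bot_of_finrank_one hl)
  refine Submodule.eq_of_le_of_finrank_le (span_le.2 (by simpa using hm)) ?_
  rw [hl, finrank_span_singleton h0]

end ShearAux

namespace ShearAux
open Submodule Module

variable {d : ℕ}

lemma det_eq_zero_of_rows_mem {M : Matrix (Fin d) (Fin d) ℂ} {p : Submodule ℂ (Fin d → ℂ)}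
    (hp : finrank ℂ p < d) (h : ∀ i, M i ∈ p) : M.det = 0 := by
  by_contra h0
  have hli : LinearIndependent ℂ fun i => M i :=
    Matrix.linearIndependent_rows_iff_isUnit.2 ((Matrix.isUnit_iff_isUnit_det M).2
      (isUnit_iff_ne_zero.2 h0))
  have hli2 : LinearIndependent ℂ fun i : Fin d => (⟨M i, h i⟩ : p) :=
    hli.of_comp p.subtype
  have := hli2.fintype_card_le_finrank
  simp at this
  omega

lemma det_ne_zero_of_rows_span {M : Matrix (Fin d) (Fin d) ℂ}
    (h : ⊤ ≤ span ℂ (Set.range fun i => M i)) : M.det ≠ 0 := by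
  have hli : LinearIndependent ℂ fun i => M i :=
    linearIndependent_of_top_le_span_of_card_eq_finrank h (by simp [finrank_pi_fin])
  intro h0
  have := (Matrix.isUnit_iff_isUnit_det M).1 (Matrix.linearIndependent_rows_iff_isUnit.1 hli)
  rw [h0] at this
  exact this.ne_zero rfl

def wMat (d a b : ℕ) (v1 v2 : ℕ → Fin d → ℂ) (x : Fin d → ℂ) : Matrix (Fin d) (Fin d) ℂ :=
  Matrix.of fun i j => if (i : ℕ) < a then v1 (i : ℕ) j
    else if (i : ℕ) < a + b then v2 ((i : ℕ) - a) j
    else x j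

lemma wedgeDet_const (a b : ℕ) (v1 v2 : ℕ → Fin d → ℂ) (x : Fin d → ℂ) :
    wedgeDet d a b v1 v2 (fun _ => x) = (wMat d a b v1 v2 x).det := rfl

lemma wMat_row (a b : ℕ) (v1 v2 : ℕ → Fin d → ℂ) (x : Fin d → ℂ) (i : Fin d) :
    wMat d a b v1 v2 x i =
      if (i : ℕ) < a then v1 (i : ℕ) else if (i : ℕ) < a + b then v2 ((i : ℕ) - a) else x := by
  funext j
  show (if (i : ℕ) < a then v1 (i : ℕ) j else if (i : ℕ) < a + b then v2 ((i : ℕ) - a) j else x j)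
    = _
  split_ifs <;> rfl

lemma wMat_eq_updateRow {a b : ℕ} (hab : a + b = d - 1) (hd : 0 < d)
    (v1 v2 : ℕ → Fin d → ℂ) (x y : Fin d → ℂ) :
    wMat d a b v1 v2 x = (wMat d a b v1 v2 y).updateRow ⟨d - 1, by omega⟩ x := by
  funext i
  rcases eq_or_ne i ⟨d - 1, by omega⟩ with rfl | hi
  · rw [Matrix.updateRow_self, wMat_row]
    split_ifs with h1 h2
    · have h1' : d - 1 < a := h1
      omega
    · have h2' : d - 1 < a + b := h2
      omega
    · rfl
  · have hi' : (i : ℕ) ≠ d - 1 := fun h => hi (Fin.ext h)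
    have hival : (i : ℕ) < a + b := by have := i.2; omega
    rw [Matrix.updateRow_ne hi, wMat_row, wMat_row]
    split_ifs <;> first | rfl | omega

/-- `x ↦ f1^a ∧ f2^b ∧ x` as a linear map, for `a + b = d - 1`. -/
def psiL (a b : ℕ) (hab : a + b = d - 1) (hd : 0 < d) (v1 v2 : ℕ → Fin d → ℂ) :
    (Fin d → ℂ) →ₗ[ℂ] ℂ where
  toFun x := wedgeDet d a b v1 v2 (fun _ => x)
  map_add' x y := by
    show wedgeDet d a b v1 v2 (fun _ => x + y)
      = wedgeDet d a b v1 v2 (fun _ => x) + wedgeDet d a b v1 v2 (fun _ => y)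
    rw [wedgeDet_const, wedgeDet_const, wedgeDet_const,
      wMat_eq_updateRow hab hd v1 v2 (x + y) 0, wMat_eq_updateRow hab hd v1 v2 x 0,
      wMat_eq_updateRow hab hd v1 v2 y 0, Matrix.det_updateRow_add]
  map_smul' s x := by
    show wedgeDet d a b v1 v2 (fun _ => s • x) = s • wedgeDet d a b v1 v2 (fun _ => x)
    rw [wedgeDet_const, wedgeDet_const, wMat_eq_updateRow hab hd v1 v2 (s • x) 0,
      wMat_eq_updateRow hab hd v1 v2 x 0, Matrix.det_updateRow_smul]
    rfl

lemma psiL_apply (a b : ℕ) (hab : a + b = d - 1) (hd : 0 < d) (v1 v2 : ℕ → Fin d → ℂ)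
    (x : Fin d → ℂ) : psiL a b hab hd v1 v2 x = wedgeDet d a b v1 v2 (fun _ => x) := rfl

lemma psiL_eq_zero {a b : ℕ} (hab : a + b = d - 1) (hd : 0 < d) {v1 v2 : ℕ → Fin d → ℂ}
    {p : Submodule ℂ (Fin d → ℂ)} (hp : finrank ℂ p < d)
    (h1 : ∀ m, m < a → v1 m ∈ p) (h2 : ∀ m, m < b → v2 m ∈ p)
    {x : Fin d → ℂ} (hx : x ∈ p) : psiL a b hab hd v1 v2 x = 0 := by
  rw [psiL_apply, wedgeDet_const]
  refine det_eq_zero_of_rows_mem hp fun i => ?_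
  rw [wMat_row]
  split_ifs with ha hb
  · exact h1 _ ha
  · exact h2 _ (by omega)
  · exact hx

lemma psiL_ne_zero {a b : ℕ} (hab : a + b = d - 1) (hd : 0 < d) {v1 v2 : ℕ → Fin d → ℂ}
    {x : Fin d → ℂ}
    (htop : span ℂ (v1 '' {m | m < a}) ⊔ span ℂ (v2 '' {m | m < b}) ⊔ span ℂ {x} = ⊤) :
    psiL a b hab hd v1 v2 x ≠ 0 := by
  rw [psiL_apply, wedgeDet_const]
  refine det_ne_zero_of_rows_span ?_
  rw [← htop]
  refine sup_le (sup_le (span_le.2 ?_) (span_le.2 ?_)) (span_le.2 ?_)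
  · rintro _ ⟨m, hm, rfl⟩
    have hma : m < a := hm
    have hmd : m < d := by omega
    refine subset_span ⟨⟨m, hmd⟩, ?_⟩
    show wMat d a b v1 v2 x ⟨m, hmd⟩ = v1 m
    rw [wMat_row, if_pos (show ((⟨m, hmd⟩ : Fin d) : ℕ) < a from hma)]
  · rintro _ ⟨m, hm, rfl⟩
    have hmb : m < b := hm
    have hmd : a + m < d := by omega
    refine subset_span ⟨⟨a + m, hmd⟩, ?_⟩
    show wMat d a b v1 v2 x ⟨a + m, hmd⟩ = v2 m
    rw [wMat_row, if_neg (show ¬ ((⟨a + m, hmd⟩ : Fin d) : ℕ) < a from by show ¬ a + m < a; omega),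
      if_pos (show ((⟨a + m, hmd⟩ : Fin d) : ℕ) < a + b from by show a + m < a + b; omega)]
    have hv : ((⟨a + m, hmd⟩ : Fin d) : ℕ) - a = m := by
      show a + m - a = m; omega
    rw [hv]
  · intro y hy
    rw [Set.mem_singleton_iff] at hy
    subst hy
    have hmd : d - 1 < d := by omega
    refine subset_span ⟨⟨d - 1, hmd⟩, ?_⟩
    show wMat d a b v1 v2 y ⟨d - 1, hmd⟩ = y
    rw [wMat_row, if_neg (show ¬ ((⟨d - 1, hmd⟩ : Fin d) : ℕ) < a from by show ¬ d - 1 < a; omega),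
      if_neg (show ¬ ((⟨d - 1, hmd⟩ : Fin d) : ℕ) < a + b from by show ¬ d - 1 < a + b; omega)]

lemma psiL_comp_eigen {a b : ℕ} (hab : a + b = d - 1) (hd : 0 < d) {v1 v2 : ℕ → Fin d → ℂ}
    (B : Basis (Fin d) ℂ (Fin d → ℂ)) (L : (Fin d → ℂ) →ₗ[ℂ] (Fin d → ℂ)) (μ : Fin d → ℂ)
    (hL : ∀ k, L (B k) = μ k • B k) (a0 : Fin d)
    (hzero : ∀ k : Fin d, k ≠ a0 → psiL a b hab hd v1 v2 (B k) = 0) (x : Fin d → ℂ) :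
    psiL a b hab hd v1 v2 (L x) = μ a0 * psiL a b hab hd v1 v2 x := by
  have key : (psiL a b hab hd v1 v2).comp L = μ a0 • psiL a b hab hd v1 v2 := by
    refine B.ext fun k => ?_
    simp only [LinearMap.comp_apply, LinearMap.smul_apply, hL k, map_smul, smul_eq_mul]
    rcases eq_or_ne k a0 with rfl | hk
    · rfl
    · rw [hzero k hk]; ring
  simpa using congrFun (congrArg DFunLike.coe key) x

end ShearAux

namespace ShearAux
open Submodule Module

variable {d : ℕ} {E1 E2 : ℕ → Submodule ℂ (Fin d → ℂ)}

lemma finrank_sup_le' (p q : Submodule ℂ (Fin d → ℂ)) :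
    finrank ℂ ↥(p ⊔ q) ≤ finrank ℂ p + finrank ℂ q := by
  have := Submodule.finrank_sup_add_finrank_inf_eq p q
  omega

lemma inf_eq_bot (hE1 : IsCompleteFlag d E1) (hE2 : IsCompleteFlag d E2)
    (htr : TransverseFlags d E1 E2) {k : ℕ} (hk : k ≤ d) : E1 k ⊓ E2 (d - k) = ⊥ := by
  have hsup := htr k hk
  have h := Submodule.finrank_sup_add_finrank_inf_eq (E1 k) (E2 (d - k))
  rw [hsup, finrank_top, finrank_pi_fin, hE1.2 k hk, hE2.2 (d - k) (by omega)] at h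
  exact Submodule.finrank_eq_zero.1 (by omega)

lemma inf_finrank_one (hE1 : IsCompleteFlag d E1) (hE2 : IsCompleteFlag d E2)
    (htr : TransverseFlags d E1 E2) {k : ℕ} (hk : k < d) :
    finrank ℂ ↥(E1 (k + 1) ⊓ E2 (d - k)) = 1 := by
  have hsup : E1 (k + 1) ⊔ E2 (d - k) = ⊤ := by
    rw [eq_top_iff, ← htr k hk.le]
    exact sup_le_sup_right (hE1.1 (Nat.le_succ k)) _
  have h := Submodule.finrank_sup_add_finrank_inf_eq (E1 (k + 1)) (E2 (d - k))
  rw [hsup, finrank_top, finrank_pi_fin, hE1.2 (k + 1) hk, hE2.2 (d - k) (by omega)] at h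
  omega

/-- The common eigenbasis vector: a nonzero vector of `E1^(k+1) ∩ E2^(d-k)`. -/
def commonVec (E1 E2 : ℕ → Submodule ℂ (Fin d → ℂ)) (k : Fin d) : Fin d → ℂ :=
  lineVec d (E1 ((k : ℕ) + 1) ⊓ E2 (d - (k : ℕ)))

lemma commonVec_spec (hE1 : IsCompleteFlag d E1) (hE2 : IsCompleteFlag d E2)
    (htr : TransverseFlags d E1 E2) (k : Fin d) :
    commonVec E1 E2 k ∈ E1 ((k : ℕ) + 1) ∧ commonVec E1 E2 k ∈ E2 (d - (k : ℕ)) ∧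
      commonVec E1 E2 k ≠ 0 := by
  obtain ⟨hm, h0⟩ := lineVec_spec (ne_bot_of_finrank_one (inf_finrank_one hE1 hE2 htr k.2))
  exact ⟨hm.1, hm.2, h0⟩

lemma commonVec_inf_eq_span (hE1 : IsCompleteFlag d E1) (hE2 : IsCompleteFlag d E2)
    (htr : TransverseFlags d E1 E2) (k : Fin d) :
    E1 ((k : ℕ) + 1) ⊓ E2 (d - (k : ℕ)) = span ℂ {commonVec E1 E2 k} :=
  (span_lineVec (inf_finrank_one hE1 hE2 htr k.2)).symm

lemma commonVec_notMem_E1 (hE1 : IsCompleteFlag d E1) (hE2 : IsCompleteFlag d E2)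
    (htr : TransverseFlags d E1 E2) (k : Fin d) : commonVec E1 E2 k ∉ E1 (k : ℕ) := by
  obtain ⟨h1, h2, h0⟩ := commonVec_spec hE1 hE2 htr k
  intro hmem
  have : commonVec E1 E2 k ∈ E1 (k : ℕ) ⊓ E2 (d - (k : ℕ)) := ⟨hmem, h2⟩
  rw [inf_eq_bot hE1 hE2 htr (le_of_lt k.2)] at this
  exact h0 this

lemma commonVec_notMem_E2 (hE1 : IsCompleteFlag d E1) (hE2 : IsCompleteFlag d E2)
    (htr : TransverseFlags d E1 E2) (k : Fin d) :
    commonVec E1 E2 k ∉ E2 (d - (k : ℕ) - 1) := by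
  obtain ⟨h1, h2, h0⟩ := commonVec_spec hE1 hE2 htr k
  intro hmem
  have hk := k.2
  have : commonVec E1 E2 k ∈ E1 ((k : ℕ) + 1) ⊓ E2 (d - ((k : ℕ) + 1)) :=
    ⟨h1, by have : d - (k : ℕ) - 1 = d - ((k : ℕ) + 1) := by omega
            rwa [this] at hmem⟩
  rw [inf_eq_bot hE1 hE2 htr (by omega)] at this
  exact h0 this

lemma span_commonVec_E1 (hE1 : IsCompleteFlag d E1) (hE2 : IsCompleteFlag d E2)
    (htr : TransverseFlags d E1 E2) :
    ∀ k, k ≤ d → E1 k = span ℂ (commonVec E1 E2 '' {m : Fin d | (m : ℕ) < k}) := by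
  intro k
  induction k with
  | zero =>
    intro _
    have hbot : E1 0 = ⊥ := Submodule.finrank_eq_zero.1 (hE1.2 0 (Nat.zero_le d))
    have hset : {m : Fin d | (m : ℕ) < 0} = ∅ := by ext m; simp
    rw [hbot, hset]
    simp
  | succ k ih =>
    intro hk
    have hkd : k < d := hk
    obtain ⟨h1, h2, h0⟩ := commonVec_spec hE1 hE2 htr ⟨k, hkd⟩
    have heq : E1 (k + 1) = E1 k ⊔ span ℂ {commonVec E1 E2 ⟨k, hkd⟩} := by
      refine step_lemma (hE1.1 (Nat.le_succ k)) h1 (commonVec_notMem_E1 hE1 hE2 htr ⟨k, hkd⟩) ?_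
      rw [hE1.2 k hkd.le, hE1.2 (k + 1) hk]
    have hset : {m : Fin d | (m : ℕ) < k + 1} = insert (⟨k, hkd⟩ : Fin d)
        {m : Fin d | (m : ℕ) < k} := by
      ext m
      simp only [Set.mem_setOf_eq, Set.mem_insert_iff, Fin.ext_iff]
      omega
    rw [hset, Set.image_insert_eq, span_insert, heq, ih hkd.le, sup_comm]

lemma span_commonVec_E2 (hE1 : IsCompleteFlag d E1) (hE2 : IsCompleteFlag d E2)
    (htr : TransverseFlags d E1 E2) :
    ∀ k, k ≤ d → E2 k = span ℂ (commonVec E1 E2 '' {m : Fin d | d - k ≤ (m : ℕ)}) := by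
  intro k
  induction k with
  | zero =>
    intro _
    have hbot : E2 0 = ⊥ := Submodule.finrank_eq_zero.1 (hE2.2 0 (Nat.zero_le d))
    have hset : {m : Fin d | d - 0 ≤ (m : ℕ)} = ∅ := by
      ext m
      simp only [Set.mem_setOf_eq, Set.mem_empty_iff_false, iff_false, not_le]
      have := m.2; omega
    rw [hbot, hset]
    simp
  | succ k ih =>
    intro hk
    have hkd : d - k - 1 < d := by omega
    obtain ⟨h1, h2, h0⟩ := commonVec_spec hE1 hE2 htr ⟨d - k - 1, hkd⟩
    have hmem : commonVec E1 E2 ⟨d - k - 1, hkd⟩ ∈ E2 (k + 1) := by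
      have hidx : d - ((⟨d - k - 1, hkd⟩ : Fin d) : ℕ) = k + 1 := by
        show d - (d - k - 1) = k + 1; omega
      rwa [hidx] at h2
    have hnmem : commonVec E1 E2 ⟨d - k - 1, hkd⟩ ∉ E2 k := by
      have := commonVec_notMem_E2 hE1 hE2 htr ⟨d - k - 1, hkd⟩
      have hidx : d - ((⟨d - k - 1, hkd⟩ : Fin d) : ℕ) - 1 = k := by
        show d - (d - k - 1) - 1 = k; omega
      rwa [hidx] at this
    have heq : E2 (k + 1) = E2 k ⊔ span ℂ {commonVec E1 E2 ⟨d - k - 1, hkd⟩} := by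
      refine step_lemma (hE2.1 (Nat.le_succ k)) hmem hnmem ?_
      rw [hE2.2 k (by omega), hE2.2 (k + 1) hk]
    have hset : {m : Fin d | d - (k + 1) ≤ (m : ℕ)} = insert (⟨d - k - 1, hkd⟩ : Fin d)
        {m : Fin d | d - k ≤ (m : ℕ)} := by
      ext m
      simp only [Set.mem_setOf_eq, Set.mem_insert_iff, Fin.ext_iff]
      have := m.2
      omega
    rw [hset, Set.image_insert_eq, span_insert, heq, ih (by omega), sup_comm]

lemma span_commonVec_top (hE1 : IsCompleteFlag d E1) (hE2 : IsCompleteFlag d E2)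
    (htr : TransverseFlags d E1 E2) : ⊤ ≤ span ℂ (Set.range (commonVec E1 E2)) := by
  have h := span_commonVec_E1 hE1 hE2 htr d le_rfl
  have hset : {m : Fin d | (m : ℕ) < d} = Set.univ := by ext m; simpa using m.2
  rw [hset, Set.image_univ] at h
  rw [← h]
  exact (flag_top hE1 le_rfl).ge

lemma commonVec_li (hE1 : IsCompleteFlag d E1) (hE2 : IsCompleteFlag d E2)
    (htr : TransverseFlags d E1 E2) : LinearIndependent ℂ (commonVec E1 E2) :=
  linearIndependent_of_top_le_span_of_card_eq_finrank (span_commonVec_top hE1 hE2 htr)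
    (by simp [finrank_pi_fin])

/-- The common eigenbasis. -/
def commonBasis (hE1 : IsCompleteFlag d E1) (hE2 : IsCompleteFlag d E2)
    (htr : TransverseFlags d E1 E2) : Basis (Fin d) ℂ (Fin d → ℂ) :=
  Basis.mk (commonVec_li hE1 hE2 htr) (span_commonVec_top hE1 hE2 htr)

lemma commonBasis_apply (hE1 : IsCompleteFlag d E1) (hE2 : IsCompleteFlag d E2)
    (htr : TransverseFlags d E1 E2) (k : Fin d) :
    commonBasis hE1 hE2 htr k = commonVec E1 E2 k := by
  simp [commonBasis]

end ShearAux

namespace ShearAux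
open Submodule Module

variable {d : ℕ} {E1 E2 : ℕ → Submodule ℂ (Fin d → ℂ)}

lemma ratio_identity (A Bv C D ν μ0 μ1 : ℂ) (hν : ν ≠ 0) :
    -((A * (ν * (μ0 * Bv))) / ((ν * (μ1 * C)) * D)) = (μ0 / μ1) * -((A * Bv) / (C * D)) := by
  have e1 : A * (ν * (μ0 * Bv)) = (ν * μ0) * (A * Bv) := by ring
  have e2 : (ν * (μ1 * C)) * D = (ν * μ1) * (C * D) := by ring
  rw [e1, e2, mul_div_mul_comm, mul_div_mul_left _ _ hν, neg_mul_eq_mul_neg]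

/-- The key computation: the effect of a joint-eigenbasis map on the double ratio. -/
lemma key_ratio (hd2 : 2 ≤ d) (hE1 : IsCompleteFlag d E1) (hE2 : IsCompleteFlag d E2)
    (htr : TransverseFlags d E1 E2)
    (c : Matrix (Fin d) (Fin d) ℂ) (μ : Fin d → ℂ) (hμ : ∀ k, μ k ≠ 0)
    (hc : ∀ k, c.mulVecLin (commonVec E1 E2 k) = μ k • commonVec E1 E2 k)
    (hcinj : Function.Injective c.mulVecLin)
    (F G : ℕ → Submodule ℂ (Fin d → ℂ)) (hG : IsCompleteFlag d G)
    (i : ℕ × ℕ) (hi : memA d i) (a0 a1 : Fin d)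
    (ha0 : (a0 : ℕ) = i.1 - 1) (ha1 : (a1 : ℕ) = i.1) :
    doubleRatio d i E1 E2 F (flagMap d c G) =
      (μ a0 / μ a1) * doubleRatio d i E1 E2 F G := by
  obtain ⟨hi1, hi2, hsum⟩ := hi
  have hd0 : 0 < d := by omega
  have hab1 : i.1 + (i.2 - 1) = d - 1 := by omega
  have hab2 : (i.1 - 1) + i.2 = d - 1 := by omega
  set u := flagBasis d E1 with hu_def
  set v := flagBasis d E2 with hv_def
  have hu := flagBasis_adapted hE1
  have hv := flagBasis_adapted hE2
  set ψ1 := psiL i.1 (i.2 - 1) hab1 hd0 u v with hψ1_def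
  set ψ2 := psiL (i.1 - 1) i.2 hab2 hd0 u v with hψ2_def
  have hDR : ∀ l1 l2 : Submodule ℂ (Fin d → ℂ), doubleRatioLine d i E1 E2 l1 l2 =
      -((ψ1 (lineVec d l1) * ψ2 (lineVec d l2)) /
        (ψ1 (lineVec d l2) * ψ2 (lineVec d l1))) := fun _ _ => rfl
  set e := commonVec E1 E2 with he_def
  set B := commonBasis hE1 hE2 htr with hB_def
  -- eigen lemmas for ψ1 (eigenvalue μ a1) and ψ2 (eigenvalue μ a0)
  have hmemu : ∀ a, a ≤ d → ∀ m, m < a → u m ∈ E1 a := by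
    intro a ha m hm
    rw [hu a ha]
    exact subset_span ⟨m, hm, rfl⟩
  have hmemv : ∀ b, b ≤ d → ∀ m, m < b → v m ∈ E2 b := by
    intro b hb m hm
    rw [hv b hb]
    exact subset_span ⟨m, hm, rfl⟩
  have hL : ∀ k, c.mulVecLin (B k) = μ k • B k := by
    intro k
    rw [hB_def, commonBasis_apply]
    exact hc k
  have heig1 : ∀ x, ψ1 (c.mulVecLin x) = μ a1 * ψ1 x := by
    refine psiL_comp_eigen hab1 hd0 B c.mulVecLin μ hL a1 ?_
    intro k hk
    rw [hB_def, commonBasis_apply]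
    have hfr : finrank ℂ ↥(E1 i.1 ⊔ E2 (i.2 - 1)) < d := by
      have := finrank_sup_le' (E1 i.1) (E2 (i.2 - 1))
      rw [hE1.2 i.1 (by omega), hE2.2 (i.2 - 1) (by omega)] at this
      omega
    refine psiL_eq_zero hab1 hd0 hfr
      (fun m hm => le_sup_left (α := Submodule ℂ (Fin d → ℂ)) (hmemu i.1 (by omega) m hm))
      (fun m hm => le_sup_right (α := Submodule ℂ (Fin d → ℂ)) (hmemv (i.2 - 1) (by omega) m hm))
      ?_
    have hkval : (k : ℕ) ≠ i.1 := by
      intro h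
      exact hk (Fin.ext (h.trans ha1.symm))
    obtain ⟨h1, h2, h0⟩ := commonVec_spec hE1 hE2 htr k
    rcases lt_or_gt_of_ne hkval with hlt | hgt
    · exact le_sup_left (α := Submodule ℂ (Fin d → ℂ)) (hE1.1 (by omega) h1)
    · exact le_sup_right (α := Submodule ℂ (Fin d → ℂ)) (hE2.1 (by omega : d - (k:ℕ) ≤ i.2 - 1) h2)
  have heig2 : ∀ x, ψ2 (c.mulVecLin x) = μ a0 * ψ2 x := by
    refine psiL_comp_eigen hab2 hd0 B c.mulVecLin μ hL a0 ?_
    intro k hk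
    rw [hB_def, commonBasis_apply]
    have hfr : finrank ℂ ↥(E1 (i.1 - 1) ⊔ E2 i.2) < d := by
      have := finrank_sup_le' (E1 (i.1 - 1)) (E2 i.2)
      rw [hE1.2 (i.1 - 1) (by omega), hE2.2 i.2 (by omega)] at this
      omega
    refine psiL_eq_zero hab2 hd0 hfr
      (fun m hm => le_sup_left (α := Submodule ℂ (Fin d → ℂ)) (hmemu (i.1 - 1) (by omega) m hm))
      (fun m hm => le_sup_right (α := Submodule ℂ (Fin d → ℂ)) (hmemv i.2 (by omega) m hm))
      ?_
    have hkval : (k : ℕ) ≠ i.1 - 1 := by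
      intro h
      exact hk (Fin.ext (h.trans ha0.symm))
    obtain ⟨h1, h2, h0⟩ := commonVec_spec hE1 hE2 htr k
    rcases lt_or_gt_of_ne hkval with hlt | hgt
    · exact le_sup_left (α := Submodule ℂ (Fin d → ℂ)) (hE1.1 (by omega) h1)
    · exact le_sup_right (α := Submodule ℂ (Fin d → ℂ)) (hE2.1 (by omega : d - (k:ℕ) ≤ i.2) h2)
  -- the image line
  set h2 := lineVec d (G 1) with hh2_def
  have hG1fr : finrank ℂ ↥(G 1) = 1 := hG.2 1 (by omega)
  obtain ⟨hh2mem, hh2ne⟩ := lineVec_spec (ne_bot_of_finrank_one hG1fr)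
  have hG1span : G 1 = span ℂ {h2} := (span_lineVec hG1fr).symm
  have hLh2ne : c.mulVecLin h2 ≠ 0 := by
    intro h
    exact hh2ne (hcinj (by simpa using h))
  have hmap : (flagMap d c G) 1 = span ℂ {c.mulVecLin h2} := by
    show Submodule.map c.mulVecLin (G 1) = _
    rw [hG1span, Submodule.map_span, Set.image_singleton]
  obtain ⟨hh2'mem, hh2'ne⟩ := lineVec_spec (l := (flagMap d c G) 1) (by
    rw [hmap]
    intro h
    exact hLh2ne (by
      have : c.mulVecLin h2 ∈ span ℂ {c.mulVecLin h2} := subset_span rfl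
      rwa [h, Submodule.mem_bot] at this))
  have hh2'mem2 : lineVec d ((flagMap d c G) 1) ∈ span ℂ {c.mulVecLin h2} := by
    rw [← hmap]; exact hh2'mem
  obtain ⟨ν, hν⟩ := mem_span_singleton.1 hh2'mem2
  have hνne : ν ≠ 0 := by
    rintro rfl
    rw [zero_smul] at hν
    exact hh2'ne hν.symm
  -- put everything together
  show doubleRatioLine d i E1 E2 (F 1) ((flagMap d c G) 1) =
    (μ a0 / μ a1) * doubleRatioLine d i E1 E2 (F 1) (G 1)
  rw [hDR, hDR]
  rw [← hν]
  rw [map_smul, map_smul, smul_eq_mul, smul_eq_mul, heig1, heig2]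
  exact ratio_identity _ _ _ _ _ _ _ hνne

end ShearAux

namespace ShearAux
open Submodule Module

variable {d : ℕ} {E1 E2 : ℕ → Submodule ℂ (Fin d → ℂ)}

/-- The matrix acting diagonally in a given basis. -/
def eigenMatrix (B : Basis (Fin d) ℂ (Fin d → ℂ)) (μ : Fin d → ℂ) :
    Matrix (Fin d) (Fin d) ℂ :=
  LinearMap.toMatrix' (B.constr ℂ fun k => μ k • B k)

lemma eigenMatrix_mulVecLin (B : Basis (Fin d) ℂ (Fin d → ℂ)) (μ : Fin d → ℂ) :
    (eigenMatrix B μ).mulVecLin = B.constr ℂ fun k => μ k • B k :=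
  Matrix.toLin'_toMatrix' _

lemma eigenMatrix_apply_basis (B : Basis (Fin d) ℂ (Fin d → ℂ)) (μ : Fin d → ℂ) (k : Fin d) :
    (eigenMatrix B μ).mulVecLin (B k) = μ k • B k := by
  rw [eigenMatrix_mulVecLin, Basis.constr_basis]

lemma eigenMatrix_isUnit (B : Basis (Fin d) ℂ (Fin d → ℂ)) {μ : Fin d → ℂ}
    (hμ : ∀ k, μ k ≠ 0) : IsUnit (eigenMatrix B μ) := by
  have h1 : (B.constr ℂ fun k => μ k • B k).comp (B.constr ℂ fun k => (μ k)⁻¹ • B k) =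
      LinearMap.id := by
    refine B.ext fun k => ?_
    simp only [LinearMap.comp_apply, Basis.constr_basis, map_smul, LinearMap.id_apply,
      smul_smul, inv_mul_cancel₀ (hμ k), one_smul]
  have h2 : (B.constr ℂ fun k => (μ k)⁻¹ • B k).comp (B.constr ℂ fun k => μ k • B k) =
      LinearMap.id := by
    refine B.ext fun k => ?_
    simp only [LinearMap.comp_apply, Basis.constr_basis, map_smul, LinearMap.id_apply,
      smul_smul, mul_inv_cancel₀ (hμ k), one_smul]
  refine ⟨⟨eigenMatrix B μ, eigenMatrix B (fun k => (μ k)⁻¹), ?_, ?_⟩, rfl⟩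
  · show eigenMatrix B μ * eigenMatrix B (fun k => (μ k)⁻¹) = 1
    rw [eigenMatrix, eigenMatrix, ← LinearMap.toMatrix'_comp, h1, LinearMap.toMatrix'_id]
  · show eigenMatrix B (fun k => (μ k)⁻¹) * eigenMatrix B μ = 1
    rw [eigenMatrix, eigenMatrix, ← LinearMap.toMatrix'_comp, h2, LinearMap.toMatrix'_id]

lemma map_span_image_eigen {e : Fin d → Fin d → ℂ} {μ : Fin d → ℂ} (hμ : ∀ k, μ k ≠ 0)
    (L : (Fin d → ℂ) →ₗ[ℂ] (Fin d → ℂ)) (hL : ∀ m, L (e m) = μ m • e m) (s : Set (Fin d)) :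
    Submodule.map L (span ℂ (e '' s)) = span ℂ (e '' s) := by
  rw [Submodule.map_span]
  refine le_antisymm (span_le.2 ?_) (span_le.2 ?_)
  · rintro _ ⟨_, ⟨m, hm, rfl⟩, rfl⟩
    rw [hL m]
    exact smul_mem _ _ (subset_span ⟨m, hm, rfl⟩)
  · rintro _ ⟨m, hm, rfl⟩
    have : e m = (μ m)⁻¹ • L (e m) := by
      rw [hL m, smul_smul, inv_mul_cancel₀ (hμ m), one_smul]
    rw [this]
    exact smul_mem _ _ (subset_span ⟨e m, ⟨m, hm, rfl⟩, rfl⟩)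

lemma flagMap_fixed {E : ℕ → Submodule ℂ (Fin d → ℂ)} (hE : IsCompleteFlag d E)
    {e : Fin d → Fin d → ℂ} {μ : Fin d → ℂ} (hμ : ∀ k, μ k ≠ 0)
    {c : Matrix (Fin d) (Fin d) ℂ} (hL : ∀ m, c.mulVecLin (e m) = μ m • e m)
    (hsurj : Function.Surjective c.mulVecLin)
    (hspan : ∀ s : ℕ → Set (Fin d), True)
    (hsp : ∀ k, k ≤ d → ∃ s : Set (Fin d), E k = span ℂ (e '' s)) :
    flagMap d c E = E := by
  funext k
  show Submodule.map c.mulVecLin (E k) = E k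
  rcases le_or_gt k d with hk | hk
  · obtain ⟨s, hs⟩ := hsp k hk
    rw [hs, map_span_image_eigen hμ c.mulVecLin hL]
  · rw [flag_top hE hk.le, Submodule.map_top, LinearMap.range_eq_top.2 hsurj]

lemma genpos_map {c : Matrix (Fin d) (Fin d) ℂ} (h1 : flagMap d c E1 = E1)
    (h2 : flagMap d c E2 = E2) (hsurj : Function.Surjective c.mulVecLin)
    {G : ℕ → Submodule ℂ (Fin d → ℂ)} (hFG : GenPos3 d E1 E2 G) :
    GenPos3 d E1 E2 (flagMap d c G) := by
  intro k1 k2 k3 hsum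
  have h1' : Submodule.map c.mulVecLin (E1 k1) = E1 k1 := congrFun h1 k1
  have h2' : Submodule.map c.mulVecLin (E2 k2) = E2 k2 := congrFun h2 k2
  show E1 k1 ⊔ E2 k2 ⊔ Submodule.map c.mulVecLin (G k3) = ⊤
  rw [← h1', ← h2', ← Submodule.map_sup, ← Submodule.map_sup, hFG k1 k2 k3 hsum,
    Submodule.map_top, LinearMap.range_eq_top.2 hsurj]

/-- The eigenvalues built from the family `w`. -/
def muW (d : ℕ) (w : ℕ × ℕ → ℂ) (k : Fin d) : ℂ :=
  ∏ a ∈ Finset.Ico ((k : ℕ) + 1) d, w (a, d - a)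

lemma muW_ne_zero {w : ℕ × ℕ → ℂ} (hw : ∀ i, memA d i → w i ≠ 0) (k : Fin d) :
    muW d w k ≠ 0 := by
  refine Finset.prod_ne_zero_iff.2 fun a ha => ?_
  rw [Finset.mem_Ico] at ha
  exact hw _ ⟨by omega, by omega, by omega⟩

lemma muW_ratio {w : ℕ × ℕ → ℂ} (hw : ∀ i, memA d i → w i ≠ 0) {i : ℕ × ℕ} (hi : memA d i)
    (a0 a1 : Fin d) (ha0 : (a0 : ℕ) = i.1 - 1) (ha1 : (a1 : ℕ) = i.1) :
    muW d w a0 / muW d w a1 = w i := by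
  obtain ⟨hi1, hi2, hsum⟩ := hi
  have h1 : muW d w a0 = w (i.1, d - i.1) * muW d w a1 := by
    rw [muW, muW, ha0, ha1]
    have hi1d : i.1 - 1 + 1 = i.1 := by omega
    rw [hi1d]
    exact Finset.prod_eq_prod_Ico_succ_bot (by omega) _
  have hiw : (i.1, d - i.1) = i := by
    ext
    · rfl
    · show d - i.1 = i.2; omega
  rw [h1, hiw, mul_div_cancel_right₀ _ (muW_ne_zero hw a1)]

lemma exists_shear (hd : 2 ≤ d) (hE1 : IsCompleteFlag d E1) (hE2 : IsCompleteFlag d E2)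
    (htr : TransverseFlags d E1 E2) (w : ℕ × ℕ → ℂ) (hw : ∀ i, memA d i → w i ≠ 0) :
    ∃ c : Matrix (Fin d) (Fin d) ℂ, ShearProp d E1 E2 w c := by
  set B := commonBasis hE1 hE2 htr with hB_def
  set μ := muW d w with hμ_def
  have hμ : ∀ k, μ k ≠ 0 := muW_ne_zero hw
  set c := eigenMatrix B μ with hc_def
  have hunit : IsUnit c := eigenMatrix_isUnit B hμ
  have hL : ∀ m : Fin d, c.mulVecLin (commonVec E1 E2 m) = μ m • commonVec E1 E2 m := by
    intro m
    have := eigenMatrix_apply_basis B μ m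
    rwa [hB_def, commonBasis_apply] at this
  have hinj : Function.Injective c.mulVecLin :=
    Matrix.mulVec_injective_iff_isUnit.2 hunit
  have hsurj : Function.Surjective c.mulVecLin := by
    obtain ⟨cu, hcu⟩ := hunit
    intro y
    exact ⟨(↑cu⁻¹ : Matrix (Fin d) (Fin d) ℂ).mulVec y, by
      show c.mulVec _ = y
      rw [Matrix.mulVec_mulVec, ← hcu, Units.mul_inv, Matrix.one_mulVec]⟩
  have hfix1 : flagMap d c E1 = E1 := by
    refine flagMap_fixed hE1 hμ hL hsurj (fun _ => trivial) fun k hk => ?_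
    exact ⟨{m : Fin d | (m : ℕ) < k}, span_commonVec_E1 hE1 hE2 htr k hk⟩
  have hfix2 : flagMap d c E2 = E2 := by
    refine flagMap_fixed hE2 hμ hL hsurj (fun _ => trivial) fun k hk => ?_
    exact ⟨{m : Fin d | d - k ≤ (m : ℕ)}, span_commonVec_E2 hE1 hE2 htr k hk⟩
  refine ⟨c, hunit, hfix1, hfix2, fun F G hF hG hgF hgG => ⟨genpos_map hfix1 hfix2 hsurj hgG, ?_⟩⟩
  intro i hi
  have hi1d : i.1 - 1 < d := by obtain ⟨h1, h2, h3⟩ := hi; omega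
  have hi1d' : i.1 < d := by obtain ⟨h1, h2, h3⟩ := hi; omega
  rw [key_ratio hd hE1 hE2 htr c μ hμ hL hinj F G hG i hi ⟨i.1 - 1, hi1d⟩ ⟨i.1, hi1d'⟩ rfl rfl,
    muW_ratio hw hi ⟨i.1 - 1, hi1d⟩ ⟨i.1, hi1d'⟩ rfl rfl]

end ShearAux

namespace ShearAux
open Submodule Module

variable {d : ℕ} {E1 E2 : ℕ → Submodule ℂ (Fin d → ℂ)}

/-- distinct nonzero scalars -/
def tv (d : ℕ) : Fin d → ℂ := fun j => ((j : ℕ) : ℂ) + 1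

lemma tv_ne (j j' : Fin d) (h : j ≠ j') : tv d j ≠ tv d j' := by
  intro he
  apply h
  have : ((j : ℕ) : ℂ) = ((j' : ℕ) : ℂ) := by
    have := he
    unfold tv at this
    linear_combination this
  exact Fin.ext (Nat.cast_injective this)

lemma det_vandermonde_tv_ne (n : ℕ) (s : Fin n → Fin d) (hs : Function.Injective s) :
    (Matrix.vandermonde fun j => tv d (s j)).det ≠ 0 := by
  rw [Matrix.det_vandermonde]
  refine Finset.prod_ne_zero_iff.2 fun i _ => Finset.prod_ne_zero_iff.2 fun j hj => ?_
  rw [Finset.mem_Ioi] at hj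
  refine sub_ne_zero.2 (tv_ne _ _ fun h => ?_)
  exact absurd (hs h) (Fin.ne_of_gt hj)

/-- rows of a generalized Vandermonde basis -/
def vRow (d : ℕ) (j : Fin d) : Fin d → ℂ := fun m => tv d j ^ (m : ℕ)

lemma vRow_eq (j : Fin d) : vRow d j = Matrix.vandermonde (tv d) j := by
  funext m; rfl

lemma vRow_li : LinearIndependent ℂ (vRow d) := by
  have hdet := det_vandermonde_tv_ne d id Function.injective_id
  have : LinearIndependent ℂ fun j => Matrix.vandermonde (tv d) j :=
    Matrix.linearIndependent_rows_iff_isUnit.2 ((Matrix.isUnit_iff_isUnit_det _).2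
      (isUnit_iff_ne_zero.2 hdet))
  have he : vRow d = fun j => Matrix.vandermonde (tv d) j := funext vRow_eq
  rw [he]
  exact this

section VFlag

variable (B : Basis (Fin d) ℂ (Fin d → ℂ))

/-- Generic vectors w.r.t. basis `B`. -/
def gVec (j : Fin d) : Fin d → ℂ := B.equivFun.symm (vRow d j)

lemma gVec_li : LinearIndependent ℂ (gVec B) :=
  vRow_li.map' B.equivFun.symm.toLinearMap B.equivFun.symm.ker

/-- extension to ℕ indices -/
def fVec (B : Basis (Fin d) ℂ (Fin d → ℂ)) (j : ℕ) : Fin d → ℂ :=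
  if h : j < d then gVec B ⟨j, h⟩ else 0

/-- The generic flag. -/
def vFlag (B : Basis (Fin d) ℂ (Fin d → ℂ)) (k : ℕ) : Submodule ℂ (Fin d → ℂ) :=
  span ℂ (fVec B '' {m | m < k})

lemma fVec_image (k : ℕ) (hk : k ≤ d) :
    fVec B '' {m | m < k} = gVec B '' {j : Fin d | (j : ℕ) < k} := by
  ext x
  constructor
  · rintro ⟨m, hm, rfl⟩
    have hmk : m < k := hm
    have hmd : m < d := by omega
    exact ⟨⟨m, hmd⟩, hmk, by simp [fVec, hmd]⟩
  · rintro ⟨j, hj, rfl⟩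
    have hjk : (j : ℕ) < k := hj
    refine ⟨(j : ℕ), hjk, ?_⟩
    have hjd : (j : ℕ) < d := j.2
    simp [fVec, hjd]

lemma card_subtype_lt (k : ℕ) (hk : k ≤ d) :
    Fintype.card {j : Fin d // (j : ℕ) < k} = k := by
  have : {j : Fin d // (j : ℕ) < k} ≃ Fin k :=
    { toFun := fun x => ⟨x.1.1, x.2⟩
      invFun := fun y => ⟨⟨y.1, by omega⟩, y.2⟩
      left_inv := fun x => by ext; rfl
      right_inv := fun y => by ext; rfl }
  rw [Fintype.card_congr this, Fintype.card_fin]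

lemma vFlag_isCompleteFlag : IsCompleteFlag d (vFlag B) := by
  constructor
  · intro a b hab
    exact span_mono (Set.image_mono fun m hm => lt_of_lt_of_le hm hab)
  · intro k hk
    rw [vFlag, fVec_image B k hk]
    have himg : gVec B '' {j : Fin d | (j : ℕ) < k} =
        Set.range fun x : {j : Fin d // (j : ℕ) < k} => gVec B x.1 :=
      Set.image_eq_range _ _
    have hli : LinearIndependent ℂ fun x : {j : Fin d // (j : ℕ) < k} => gVec B x.1 :=
      (gVec_li B).comp _ Subtype.val_injective
    rw [himg, finrank_span_eq_card hli, card_subtype_lt k hk]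

lemma gVec_coords (j : Fin d) : gVec B j = ∑ m : Fin d, (tv d j ^ (m : ℕ)) • B m := by
  rw [gVec, Basis.equivFun_symm_apply]
  rfl

lemma vFlag_genPos (hE1 : IsCompleteFlag d E1) (hE2 : IsCompleteFlag d E2)
    (htr : TransverseFlags d E1 E2) :
    GenPos3 d E1 E2 (vFlag (commonBasis hE1 hE2 htr)) := by
  set B := commonBasis hE1 hE2 htr with hB_def
  intro k1 k2 k3 hsum
  rw [eq_top_iff, ← B.span_eq]
  refine span_le.2 ?_
  rintro _ ⟨m, rfl⟩
  obtain ⟨hm1, hm2, hm0⟩ := commonVec_spec hE1 hE2 htr m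
  have hBm : B m = commonVec E1 E2 m := commonBasis_apply hE1 hE2 htr m
  by_cases hc1 : (m : ℕ) < k1
  · refine le_sup_left (α := Submodule ℂ (Fin d → ℂ)) (le_sup_left (α := Submodule ℂ (Fin d → ℂ)) ?_)
    rw [hBm]
    exact hE1.1 (by omega) hm1
  by_cases hc2 : k1 + k3 ≤ (m : ℕ)
  · refine le_sup_left (α := Submodule ℂ (Fin d → ℂ)) (le_sup_right (α := Submodule ℂ (Fin d → ℂ)) ?_)
    rw [hBm]
    exact hE2.1 (by omega) hm2
  -- interval case
  push_neg at hc1 hc2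
  have hk3pos : 0 < k3 := by omega
  have hk3d : k3 ≤ d := by omega
  set emb : Fin k3 → Fin d := fun j => ⟨(j : ℕ), by omega⟩ with hemb_def
  set V' : Matrix (Fin k3) (Fin k3) ℂ :=
    Matrix.of (fun j l => tv d (emb j) ^ (k1 + (l : ℕ))) with hV'_def
  have hV'fact : V' = Matrix.diagonal (fun j => tv d (emb j) ^ k1) *
      Matrix.vandermonde (fun j => tv d (emb j)) := by
    ext j l
    rw [Matrix.diagonal_mul, Matrix.vandermonde_apply]
    show tv d (emb j) ^ (k1 + (l : ℕ)) = _
    rw [pow_add]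
  have htvne : ∀ j : Fin k3, tv d (emb j) ≠ 0 := by
    intro j
    show ((((emb j) : Fin d) : ℕ) : ℂ) + 1 ≠ 0
    have h1 : ((((emb j : Fin d) : ℕ) + 1 : ℕ) : ℂ) ≠ 0 := Nat.cast_ne_zero.2 (Nat.succ_ne_zero _)
    push_cast at h1
    exact h1
  have hembinj : Function.Injective emb := by
    intro a b hab
    have h' : ((emb a : Fin d) : ℕ) = ((emb b : Fin d) : ℕ) := congrArg Fin.val hab
    exact Fin.ext h'
  have hdet : IsUnit V'.det := by
    rw [hV'fact, Matrix.det_mul, Matrix.det_diagonal]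
    refine (IsUnit.mul ?_ ?_)
    · exact isUnit_iff_ne_zero.2 (Finset.prod_ne_zero_iff.2 fun j _ => pow_ne_zero _ (htvne j))
    · exact isUnit_iff_ne_zero.2 (det_vandermonde_tv_ne k3 emb hembinj)
  set m' : Fin k3 := ⟨(m : ℕ) - k1, by omega⟩ with hm'_def
  obtain ⟨α, hαV'⟩ : ∃ α : Fin k3 → ℂ, Matrix.vecMul α V' = Pi.single m' 1 :=
    ⟨Matrix.vecMul (Pi.single m' 1) V'⁻¹, by
      rw [Matrix.vecMul_vecMul, Matrix.nonsing_inv_mul _ hdet, Matrix.vecMul_one]⟩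
  -- the combination vector
  set y : Fin d → ℂ := fun mm => ∑ j : Fin k3, α j * tv d (emb j) ^ (mm : ℕ) with hy_def
  set vv : Fin d → ℂ := B.equivFun.symm y with hvv_def
  have hvv_mem : vv ∈ vFlag B k3 := by
    have hvv_eq : vv = ∑ j : Fin k3, α j • gVec B (emb j) := by
      rw [hvv_def]
      have hy_eq : y = ∑ j : Fin k3, α j • vRow d (emb j) := by
        funext mm
        rw [hy_def]
        simp only [Finset.sum_apply, Pi.smul_apply, smul_eq_mul]
        rfl
      rw [hy_eq, map_sum]
      congr 1
      funext j
      rw [map_smul]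
      rfl
    rw [hvv_eq]
    refine sum_mem fun j _ => smul_mem _ _ ?_
    rw [vFlag]
    refine subset_span ⟨(j : ℕ), j.2, ?_⟩
    show fVec B (j : ℕ) = gVec B (emb j)
    have hjd : (j : ℕ) < d := by omega
    rw [fVec, dif_pos hjd]
  -- interval coordinates of y
  have hy_interval : ∀ mm : Fin d, k1 ≤ (mm : ℕ) → (mm : ℕ) < k1 + k3 →
      y mm = if mm = m then 1 else 0 := by
    intro mm h1 h2
    have hld : (mm : ℕ) - k1 < k3 := by omega
    set l : Fin k3 := ⟨(mm : ℕ) - k1, hld⟩ with hl_def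
    have hVcol : ∀ j : Fin k3, V' j l = tv d (emb j) ^ (mm : ℕ) := by
      intro j
      show tv d (emb j) ^ (k1 + ((mm : ℕ) - k1)) = _
      congr 1
      omega
    have hy_val : y mm = (Matrix.vecMul α V') l := by
      have hdot : (Matrix.vecMul α V') l = ∑ j : Fin k3, α j * V' j l := rfl
      rw [hdot]
      show (∑ j : Fin k3, α j * tv d (emb j) ^ (mm : ℕ)) = _
      exact Finset.sum_congr rfl fun j _ => by rw [hVcol j]
    rw [hy_val, hαV']
    rcases eq_or_ne mm m with rfl | hne
    · rw [if_pos rfl]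
      have hlm : l = m' := rfl
      rw [hlm, Pi.single_eq_same]
    · rw [if_neg hne]
      have hne' : l ≠ m' := by
        intro h
        have h1' : (mm : ℕ) - k1 = (m : ℕ) - k1 := congrArg Fin.val h
        exact hne (Fin.ext (by omega))
      exact Pi.single_eq_of_ne hne' 1
  -- conclude
  have hsplit : B m = vv - B.equivFun.symm (y - Pi.single m 1) := by
    rw [hvv_def, ← map_sub, sub_sub_cancel]
    have : B.equivFun.symm (Pi.single m 1) = B m := by
      rw [Basis.equivFun_symm_apply]
      simp [Pi.single_apply]
    rw [this]
  have hz_mem : B.equivFun.symm (y - Pi.single m 1) ∈ E1 k1 ⊔ E2 k2 := by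
    rw [Basis.equivFun_symm_apply]
    refine sum_mem fun mm _ => ?_
    obtain ⟨hmm1, hmm2, _⟩ := commonVec_spec hE1 hE2 htr mm
    have hBmm : B mm = commonVec E1 E2 mm := commonBasis_apply hE1 hE2 htr mm
    by_cases hd1 : (mm : ℕ) < k1
    · refine smul_mem _ _ (le_sup_left (α := Submodule ℂ (Fin d → ℂ)) ?_)
      rw [hBmm]
      exact hE1.1 (by omega) hmm1
    by_cases hd2 : k1 + k3 ≤ (mm : ℕ)
    · refine smul_mem _ _ (le_sup_right (α := Submodule ℂ (Fin d → ℂ)) ?_)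
      rw [hBmm]
      exact hE2.1 (by omega) hmm2
    · push_neg at hd1 hd2
      have hy0 := hy_interval mm hd1 hd2
      have hcoeff : (y - Pi.single m 1 : Fin d → ℂ) mm = 0 := by
        rw [Pi.sub_apply, hy0, Pi.single_apply]
        split_ifs <;> simp
      rw [hcoeff, zero_smul]
      exact zero_mem _
  rw [hsplit]
  exact sub_mem (le_sup_right (α := Submodule ℂ (Fin d → ℂ)) hvv_mem)
    (le_sup_left (α := Submodule ℂ (Fin d → ℂ)) hz_mem)

end VFlag

end ShearAux

namespace ShearAux
open Submodule Module

variable {d : ℕ} {E1 E2 : ℕ → Submodule ℂ (Fin d → ℂ)}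

lemma doubleRatio_self (hd2 : 2 ≤ d) (hE1 : IsCompleteFlag d E1) (hE2 : IsCompleteFlag d E2)
    {H : ℕ → Submodule ℂ (Fin d → ℂ)} (hH : IsCompleteFlag d H) (hgH : GenPos3 d E1 E2 H)
    {i : ℕ × ℕ} (hi : memA d i) : doubleRatio d i E1 E2 H H = -1 := by
  obtain ⟨hi1, hi2, hsum⟩ := hi
  have hd0 : 0 < d := by omega
  have hab1 : i.1 + (i.2 - 1) = d - 1 := by omega
  have hab2 : (i.1 - 1) + i.2 = d - 1 := by omega
  set u := flagBasis d E1 with hu_def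
  set v := flagBasis d E2 with hv_def
  have hu := flagBasis_adapted hE1
  have hv := flagBasis_adapted hE2
  set ψ1 := psiL i.1 (i.2 - 1) hab1 hd0 u v with hψ1_def
  set ψ2 := psiL (i.1 - 1) i.2 hab2 hd0 u v with hψ2_def
  have hDR : ∀ l1 l2 : Submodule ℂ (Fin d → ℂ), doubleRatioLine d i E1 E2 l1 l2 =
      -((ψ1 (lineVec d l1) * ψ2 (lineVec d l2)) /
        (ψ1 (lineVec d l2) * ψ2 (lineVec d l1))) := fun _ _ => rfl
  set h := lineVec d (H 1) with hh_def
  have hH1fr : finrank ℂ ↥(H 1) = 1 := hH.2 1 (by omega)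
  have hspan : span ℂ {h} = H 1 := span_lineVec hH1fr
  have hψ1ne : ψ1 h ≠ 0 := by
    refine psiL_ne_zero hab1 hd0 ?_
    rw [← hu i.1 (by omega), ← hv (i.2 - 1) (by omega), hspan]
    exact hgH i.1 (i.2 - 1) 1 (by omega)
  have hψ2ne : ψ2 h ≠ 0 := by
    refine psiL_ne_zero hab2 hd0 ?_
    rw [← hu (i.1 - 1) (by omega), ← hv i.2 (by omega), hspan]
    exact hgH (i.1 - 1) i.2 1 (by omega)
  show doubleRatioLine d i E1 E2 (H 1) (H 1) = -1
  rw [hDR, div_self (mul_ne_zero hψ1ne hψ2ne)]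

lemma shear_eigen (hd2 : 2 ≤ d) (hE1 : IsCompleteFlag d E1) (hE2 : IsCompleteFlag d E2)
    (htr : TransverseFlags d E1 E2) {w : ℕ × ℕ → ℂ} (hw : ∀ i, memA d i → w i ≠ 0)
    {c : Matrix (Fin d) (Fin d) ℂ} (hc : ShearProp d E1 E2 w c) :
    ∃ μ : Fin d → ℂ, (∀ k, μ k ≠ 0) ∧
      (∀ k : Fin d, c.mulVecLin (commonVec E1 E2 k) = μ k • commonVec E1 E2 k) ∧
      (∀ a0 a1 : Fin d, (a0 : ℕ) + 1 = (a1 : ℕ) →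
        μ a0 = w ((a1 : ℕ), d - (a1 : ℕ)) * μ a1) := by
  obtain ⟨hunit, hfix1, hfix2, hmain⟩ := hc
  have hinj : Function.Injective c.mulVecLin := Matrix.mulVec_injective_iff_isUnit.2 hunit
  have hex : ∀ k : Fin d, ∃ t : ℂ, t • commonVec E1 E2 k = c.mulVecLin (commonVec E1 E2 k) := by
    intro k
    obtain ⟨h1, h2, h0⟩ := commonVec_spec hE1 hE2 htr k
    have hm1 : c.mulVecLin (commonVec E1 E2 k) ∈ E1 ((k : ℕ) + 1) := by
      have := congrFun hfix1 ((k : ℕ) + 1)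
      rw [← this]
      exact Submodule.mem_map_of_mem h1
    have hm2 : c.mulVecLin (commonVec E1 E2 k) ∈ E2 (d - (k : ℕ)) := by
      have := congrFun hfix2 (d - (k : ℕ))
      rw [← this]
      exact Submodule.mem_map_of_mem h2
    have : c.mulVecLin (commonVec E1 E2 k) ∈ span ℂ {commonVec E1 E2 k} := by
      rw [← commonVec_inf_eq_span hE1 hE2 htr k]
      exact ⟨hm1, hm2⟩
    exact mem_span_singleton.1 this
  choose μ hμeq using hex
  have hμeq' : ∀ k, c.mulVecLin (commonVec E1 E2 k) = μ k • commonVec E1 E2 k :=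
    fun k => (hμeq k).symm
  have hμne : ∀ k, μ k ≠ 0 := by
    intro k h0
    obtain ⟨h1, h2, hne⟩ := commonVec_spec hE1 hE2 htr k
    apply hne
    apply hinj
    show c.mulVecLin (commonVec E1 E2 k) = c.mulVecLin 0
    rw [hμeq' k, h0, zero_smul, map_zero]
  refine ⟨μ, hμne, hμeq', ?_⟩
  intro a0 a1 ha01
  set H := vFlag (commonBasis hE1 hE2 htr) with hH_def
  have hH : IsCompleteFlag d H := vFlag_isCompleteFlag _
  have hgH : GenPos3 d E1 E2 H := vFlag_genPos hE1 hE2 htr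
  have hi : memA d ((a1 : ℕ), d - (a1 : ℕ)) := by
    refine ⟨by omega, ?_, by omega⟩
    show 0 < d - (a1 : ℕ)
    have := a1.2
    omega
  obtain ⟨-, hratio⟩ := hmain H H hH hH hgH hgH
  have h1 := hratio ((a1 : ℕ), d - (a1 : ℕ)) hi
  have h2 := key_ratio hd2 hE1 hE2 htr c μ hμne hμeq' hinj H H hH
    ((a1 : ℕ), d - (a1 : ℕ)) hi a0 a1 (by show (a0 : ℕ) = (a1 : ℕ) - 1; omega) rfl
  rw [h2, doubleRatio_self hd2 hE1 hE2 hH hgH hi] at h1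
  have h3 : μ a0 / μ a1 = w ((a1 : ℕ), d - (a1 : ℕ)) :=
    mul_right_cancel₀ (by norm_num : (-1 : ℂ) ≠ 0) h1
  rw [div_eq_iff (hμne a1)] at h3
  rw [h3, mul_comm]

lemma shear_unique (hd2 : 2 ≤ d) (hE1 : IsCompleteFlag d E1) (hE2 : IsCompleteFlag d E2)
    (htr : TransverseFlags d E1 E2) {w : ℕ × ℕ → ℂ} (hw : ∀ i, memA d i → w i ≠ 0)
    {c c' : Matrix (Fin d) (Fin d) ℂ} (hc : ShearProp d E1 E2 w c)
    (hc' : ShearProp d E1 E2 w c') : ∃ γ : ℂ, γ ≠ 0 ∧ c' = γ • c := by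
  obtain ⟨μ, hμne, hμeq, hμrel⟩ := shear_eigen hd2 hE1 hE2 htr hw hc
  obtain ⟨μ', hμ'ne, hμ'eq, hμ'rel⟩ := shear_eigen hd2 hE1 hE2 htr hw hc'
  have hd0 : 0 < d := by omega
  set dlast : Fin d := ⟨d - 1, by omega⟩ with hdlast_def
  set γ := μ' dlast / μ dlast with hγ_def
  have hγne : γ ≠ 0 := div_ne_zero (hμ'ne dlast) (hμne dlast)
  have hind : ∀ j : ℕ, j ≤ d - 1 → ∀ k : Fin d, (k : ℕ) = d - 1 - j → μ' k = γ * μ k := by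
    intro j
    induction j with
    | zero =>
      intro _ k hk
      have : k = dlast := Fin.ext (by rw [hk]; rfl)
      rw [this, hγ_def, div_mul_cancel₀ _ (hμne dlast)]
    | succ j ih =>
      intro hj k hk
      have ha1lt : d - 1 - j < d := by omega
      set a1 : Fin d := ⟨d - 1 - j, ha1lt⟩ with ha1_def
      have hka1 : (k : ℕ) + 1 = (a1 : ℕ) := by
        show (k : ℕ) + 1 = d - 1 - j
        omega
      have h1 := hμrel k a1 hka1
      have h2 := hμ'rel k a1 hka1
      have h3 := ih (by omega) a1 rfl
      rw [h2, h3, h1]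
      ring
  have hall : ∀ k : Fin d, μ' k = γ * μ k := by
    intro k
    have hk := k.2
    exact hind (d - 1 - (k : ℕ)) (by omega) k (by omega)
  refine ⟨γ, hγne, ?_⟩
  have hlin : Matrix.toLin' c' = Matrix.toLin' (γ • c) := by
    refine Basis.ext (commonBasis hE1 hE2 htr) fun k => ?_
    rw [commonBasis_apply]
    show c'.mulVecLin (commonVec E1 E2 k) = (γ • c).mulVecLin (commonVec E1 E2 k)
    rw [hμ'eq k]
    have : (γ • c).mulVecLin (commonVec E1 E2 k) = γ • c.mulVecLin (commonVec E1 E2 k) :=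
      Matrix.smul_mulVec γ c (commonVec E1 E2 k)
    rw [this, hμeq k, hall k, smul_smul]
  calc c' = LinearMap.toMatrix' (Matrix.toLin' c') := (LinearMap.toMatrix'_toLin' c').symm
    _ = LinearMap.toMatrix' (Matrix.toLin' (γ • c)) := by rw [hlin]
    _ = γ • c := LinearMap.toMatrix'_toLin' _

end ShearAux

theorem statement_10 (d : ℕ) (hd : 2 ≤ d) (E1 E2 : ℕ → Submodule ℂ (Fin d → ℂ))
    (hE1 : IsCompleteFlag d E1) (hE2 : IsCompleteFlag d E2) (htr : TransverseFlags d E1 E2)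
    (w : ℕ × ℕ → ℂ) (hw : ∀ i, memA d i → w i ≠ 0) :
    (∃ c : Matrix (Fin d) (Fin d) ℂ, ShearProp d E1 E2 w c) ∧
    ∀ c c' : Matrix (Fin d) (Fin d) ℂ, ShearProp d E1 E2 w c → ShearProp d E1 E2 w c' →
      ∃ γ : ℂ, γ ≠ 0 ∧ c' = γ • c :=
  ⟨ShearAux.exists_shear hd hE1 hE2 htr w hw,
   fun _ _ hc hc' => ShearAux.shear_unique hd hE1 hE2 htr hw hc hc'⟩
end
end

section
/- Let (F1,F2,F3) be a triple of complete flags of ℂ^3 in general position. Then T^{(1,1,1)}(F1,F2,F3) = −1 if and only if the subspace F1^2 ∩ F2^2 ∩ F3^2 of ℂ^3 is 1-dimensional. -/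
noncomputable section

open Submodule Module

theorem exists_adapted (d : ℕ) (F : ℕ → Submodule ℂ (Fin d → ℂ)) (h : IsCompleteFlag d F) :
    ∃ v, IsAdaptedBasis d F v := by
  have ex : ∀ k, k + 1 ≤ d → ∃ w : Fin d → ℂ, w ∈ F (k + 1) ∧ w ∉ F k := by
    intro k hk
    have hlt : F k < F (k + 1) := by
      refine lt_of_le_of_ne (h.1 (Nat.le_succ k)) ?_
      intro heq
      have := h.2 k (by omega)
      rw [heq, h.2 (k+1) hk] at this
      omega
    obtain ⟨w, hw1, hw2⟩ := SetLike.exists_of_lt hlt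
    exact ⟨w, hw1, hw2⟩
  classical
  refine ⟨fun k => if hk : k + 1 ≤ d then Classical.choose (ex k hk) else 0, ?_⟩
  intro k hk
  induction k with
  | zero =>
    have : F 0 = ⊥ := Submodule.finrank_eq_zero.mp (h.2 0 (by omega))
    simp [this, show {m : ℕ | m < 0} = ∅ by ext m; simp]
  | succ k ih =>
    have hk' : k ≤ d := by omega
    have IH := ih hk'
    have hset : {m : ℕ | m < k + 1} = insert k {m : ℕ | m < k} := by ext m; simp; omega
    set v : ℕ → Fin d → ℂ := fun k => if hk : k + 1 ≤ d then Classical.choose (ex k hk) else 0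
      with hv
    have hvk : v k = Classical.choose (ex k hk) := by rw [hv]; exact dif_pos hk
    obtain ⟨hw1, hw2⟩ := Classical.choose_spec (ex k hk)
    rw [hset, Set.image_insert_eq, Submodule.span_insert, ← IH]
    have hle : (span ℂ {v k} : Submodule ℂ (Fin d → ℂ)) ⊔ F k ≤ F (k + 1) := by
      refine sup_le ?_ (h.1 (Nat.le_succ k))
      rw [span_singleton_le_iff_mem, hvk]
      exact hw1
    have hltr : F k < span ℂ {v k} ⊔ F k := by
      refine lt_of_le_of_ne le_sup_right ?_
      intro heq
      apply hw2
      rw [← hvk] at hw2 ⊢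
      have : v k ∈ span ℂ {v k} ⊔ F k :=
        le_sup_left (α := Submodule ℂ (Fin d → ℂ)) (mem_span_singleton_self (v k))
      rwa [← heq] at this
    have hfr : k < finrank ℂ ↥(span ℂ {v k} ⊔ F k) := by
      have := Submodule.finrank_lt_finrank_of_lt hltr
      rw [h.2 k hk'] at this
      omega
    refine (Submodule.eq_of_le_of_finrank_le hle ?_).symm
    rw [h.2 (k+1) hk]
    omega

theorem range_mat (x y z : Fin 3 → ℂ) :
    Set.range (![x, y, z] : Matrix (Fin 3) (Fin 3) ℂ) = {x, y, z} := by
  ext w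
  constructor
  · rintro ⟨i, rfl⟩; fin_cases i <;> simp
  · rintro (rfl | rfl | rfl); exacts [⟨0, rfl⟩, ⟨1, rfl⟩, ⟨2, rfl⟩]

theorem det3 (x y z : Fin 3 → ℂ) : Matrix.det ![x, y, z] = x 0 * y 1 * z 2 - x 0 * y 2 * z 1 - x 1 * y 0 * z 2 + x 1 * y 2 * z 0 + x 2 * y 0 * z 1 - x 2 * y 1 * z 0 :=
  Matrix.det_fin_three _

theorem det_ne_zero_iff_span (x y z : Fin 3 → ℂ) :
    Matrix.det ![x, y, z] ≠ 0 ↔ Submodule.span ℂ {x, y, z} = ⊤ := by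
  set M : Matrix (Fin 3) (Fin 3) ℂ := Matrix.of ![x, y, z] with hM
  have hdet : Matrix.det ![x, y, z] = M.det := rfl
  have hrange : Set.range M = {x, y, z} := range_mat x y z
  rw [hdet]
  constructor
  · intro hd
    have hu : IsUnit M := (Matrix.isUnit_iff_isUnit_det _).mpr (isUnit_iff_ne_zero.mpr hd)
    have hs : Function.Surjective M.vecMul := Matrix.vecMul_surjective_iff_isUnit.mpr hu
    have h : LinearMap.range M.vecMulLinear = ⊤ := LinearMap.range_eq_top.mpr hs
    rw [range_vecMulLinear, show Set.range M.row = Set.range M from rfl, hrange] at h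
    exact h
  · intro hspan
    have h : LinearMap.range M.vecMulLinear = ⊤ := by
      rw [range_vecMulLinear, show Set.range M.row = Set.range M from rfl, hrange]; exact hspan
    have hs : Function.Surjective M.vecMul := LinearMap.range_eq_top.mp h
    exact isUnit_iff_ne_zero.mp
      ((Matrix.isUnit_iff_isUnit_det _).mp (Matrix.vecMul_surjective_iff_isUnit.mp hs))

theorem mem_span_pair_iff_det (p q r x : Fin 3 → ℂ) (h : Matrix.det ![p, q, r] ≠ 0) :
    x ∈ Submodule.span ℂ {p, q} ↔ Matrix.det ![p, q, x] = 0 := by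
  constructor
  · intro hx
    obtain ⟨α, β, rfl⟩ := Submodule.mem_span_pair.mp hx
    simp [Matrix.det_fin_three, det3]; ring
  · intro hdet
    have htop := (det_ne_zero_iff_span p q r).mp h
    have hx : x ∈ Submodule.span ℂ ({p, q, r} : Set (Fin 3 → ℂ)) := htop ▸ Submodule.mem_top
    rw [show ({p, q, r} : Set (Fin 3 → ℂ)) = insert p (insert q {r}) from rfl] at hx
    obtain ⟨α, w, hw, rfl⟩ := Submodule.mem_span_insert.mp hx
    obtain ⟨β, w', hw', rfl⟩ := Submodule.mem_span_insert.mp hw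
    obtain ⟨γ, rfl⟩ := Submodule.mem_span_singleton.mp hw'
    have hγ : γ * Matrix.det ![p, q, r] = 0 := by
      rw [← hdet]; simp [Matrix.det_fin_three, det3]; ring
    have hγ0 : γ = 0 := by
      rcases mul_eq_zero.mp hγ with h0 | h0
      · exact h0
      · exact absurd h0 h
    subst hγ0
    simp only [zero_smul, add_zero]
    exact Submodule.mem_span_pair.mpr ⟨α, β, by ring⟩

theorem image_lt_one (v : ℕ → Fin 3 → ℂ) : v '' {m | m < 1} = {v 0} := by
  ext w
  simp only [Set.mem_image, Set.mem_setOf_eq, Set.mem_singleton_iff]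
  constructor
  · rintro ⟨m, hm, rfl⟩
    interval_cases m
    rfl
  · rintro rfl
    exact ⟨0, by omega, rfl⟩

theorem image_lt_two (v : ℕ → Fin 3 → ℂ) : v '' {m | m < 2} = {v 0, v 1} := by
  ext w
  simp only [Set.mem_image, Set.mem_setOf_eq, Set.mem_insert_iff, Set.mem_singleton_iff]
  constructor
  · rintro ⟨m, hm, rfl⟩
    interval_cases m
    · exact Or.inl rfl
    · exact Or.inr rfl
  · rintro (rfl | rfl)
    exacts [⟨0, by omega, rfl⟩, ⟨1, by omega, rfl⟩]

theorem wedge21 (v1 v2 v3 : ℕ → Fin 3 → ℂ) :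
    wedgeDet 3 2 1 v1 v2 v3 = Matrix.det ![v1 0, v1 1, v2 0] := by
  unfold wedgeDet; congr 1; ext i j; fin_cases i <;> norm_num

theorem wedge10 (v1 v2 v3 : ℕ → Fin 3 → ℂ) :
    wedgeDet 3 1 0 v1 v2 v3 = Matrix.det ![v1 0, v3 0, v3 1] := by
  unfold wedgeDet; congr 1; ext i j; fin_cases i <;> norm_num

theorem wedge02 (v1 v2 v3 : ℕ → Fin 3 → ℂ) :
    wedgeDet 3 0 2 v1 v2 v3 = Matrix.det ![v2 0, v2 1, v3 0] := by
  unfold wedgeDet; congr 1; ext i j; fin_cases i <;> norm_num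

theorem wedge01 (v1 v2 v3 : ℕ → Fin 3 → ℂ) :
    wedgeDet 3 0 1 v1 v2 v3 = Matrix.det ![v2 0, v3 0, v3 1] := by
  unfold wedgeDet; congr 1; ext i j; fin_cases i <;> norm_num

theorem wedge12 (v1 v2 v3 : ℕ → Fin 3 → ℂ) :
    wedgeDet 3 1 2 v1 v2 v3 = Matrix.det ![v1 0, v2 0, v2 1] := by
  unfold wedgeDet; congr 1; ext i j; fin_cases i <;> norm_num

theorem wedge20 (v1 v2 v3 : ℕ → Fin 3 → ℂ) :
    wedgeDet 3 2 0 v1 v2 v3 = Matrix.det ![v1 0, v1 1, v3 0] := by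
  unfold wedgeDet; congr 1; ext i j; fin_cases i <;> norm_num

theorem statement_14 (F1 F2 F3 : ℕ → Submodule ℂ (Fin 3 → ℂ))
    (h1 : IsCompleteFlag 3 F1) (h2 : IsCompleteFlag 3 F2) (h3 : IsCompleteFlag 3 F3)
    (hgen : GenPos3 3 F1 F2 F3) :
    tripleRatio 3 (1, 1, 1) F1 F2 F3 = -1 ↔
      Module.finrank ℂ ↥(F1 2 ⊓ F2 2 ⊓ F3 2) = 1 := by
  classical
  have hb1 : IsAdaptedBasis 3 F1 (flagBasis 3 F1) :=
    Classical.epsilon_spec (exists_adapted 3 F1 h1)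
  have hb2 : IsAdaptedBasis 3 F2 (flagBasis 3 F2) :=
    Classical.epsilon_spec (exists_adapted 3 F2 h2)
  have hb3 : IsAdaptedBasis 3 F3 (flagBasis 3 F3) :=
    Classical.epsilon_spec (exists_adapted 3 F3 h3)
  set v1 : ℕ → Fin 3 → ℂ := flagBasis 3 F1 with hv1
  set v2 : ℕ → Fin 3 → ℂ := flagBasis 3 F2 with hv2
  set v3 : ℕ → Fin 3 → ℂ := flagBasis 3 F3 with hv3
  have hF11 : F1 1 = span ℂ {v1 0} := by rw [hb1 1 (by omega), image_lt_one]
  have hF12 : F1 2 = span ℂ {v1 0, v1 1} := by rw [hb1 2 (by omega), image_lt_two]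
  have hF21 : F2 1 = span ℂ {v2 0} := by rw [hb2 1 (by omega), image_lt_one]
  have hF22 : F2 2 = span ℂ {v2 0, v2 1} := by rw [hb2 2 (by omega), image_lt_two]
  have hF31 : F3 1 = span ℂ {v3 0} := by rw [hb3 1 (by omega), image_lt_one]
  have hF32 : F3 2 = span ℂ {v3 0, v3 1} := by rw [hb3 2 (by omega), image_lt_two]
  have hF10 : F1 0 = ⊥ := Submodule.finrank_eq_zero.mp (h1.2 0 (by omega))
  have hF20 : F2 0 = ⊥ := Submodule.finrank_eq_zero.mp (h2.2 0 (by omega))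
  have hF30 : F3 0 = ⊥ := Submodule.finrank_eq_zero.mp (h3.2 0 (by omega))
  -- notation for the six vectors
  set a := v1 0; set b := v1 1; set c := v2 0; set d := v2 1; set e := v3 0; set f := v3 1
  -- nonvanishing determinants
  have hsub : ∀ (s t : Set (Fin 3 → ℂ)), s ⊆ t → span ℂ s ≤ span ℂ t :=
    fun s t h => Submodule.span_mono h
  have habc : Matrix.det ![a, b, c] ≠ 0 := by
    rw [det_ne_zero_iff_span]
    refine le_antisymm le_top ?_
    rw [← hgen 2 1 0 rfl, hF12, hF21, hF30]
    refine sup_le (sup_le (hsub _ _ ?_) (hsub _ _ ?_)) bot_le <;>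
      · intro t ht; simp only [Set.mem_insert_iff, Set.mem_singleton_iff] at ht ⊢; tauto
  have haef : Matrix.det ![a, e, f] ≠ 0 := by
    rw [det_ne_zero_iff_span]
    refine le_antisymm le_top ?_
    rw [← hgen 1 0 2 rfl, hF11, hF32, hF20]
    refine sup_le (sup_le (hsub _ _ ?_) bot_le) (hsub _ _ ?_) <;>
      · intro t ht; simp only [Set.mem_insert_iff, Set.mem_singleton_iff] at ht ⊢; tauto
  have hcde : Matrix.det ![c, d, e] ≠ 0 := by
    rw [det_ne_zero_iff_span]
    refine le_antisymm le_top ?_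
    rw [← hgen 0 2 1 rfl, hF22, hF31, hF10]
    refine sup_le (sup_le bot_le (hsub _ _ ?_)) (hsub _ _ ?_) <;>
      · intro t ht; simp only [Set.mem_insert_iff, Set.mem_singleton_iff] at ht ⊢; tauto
  have hcef : Matrix.det ![c, e, f] ≠ 0 := by
    rw [det_ne_zero_iff_span]
    refine le_antisymm le_top ?_
    rw [← hgen 0 1 2 rfl, hF21, hF32, hF10]
    refine sup_le (sup_le bot_le (hsub _ _ ?_)) (hsub _ _ ?_) <;>
      · intro t ht; simp only [Set.mem_insert_iff, Set.mem_singleton_iff] at ht ⊢; tauto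
  have hacd : Matrix.det ![a, c, d] ≠ 0 := by
    rw [det_ne_zero_iff_span]
    refine le_antisymm le_top ?_
    rw [← hgen 1 2 0 rfl, hF11, hF22, hF30]
    refine sup_le (sup_le (hsub _ _ ?_) (hsub _ _ ?_)) bot_le <;>
      · intro t ht; simp only [Set.mem_insert_iff, Set.mem_singleton_iff] at ht ⊢; tauto
  have habe : Matrix.det ![a, b, e] ≠ 0 := by
    rw [det_ne_zero_iff_span]
    refine le_antisymm le_top ?_
    rw [← hgen 2 0 1 rfl, hF12, hF31, hF20]
    refine sup_le (sup_le (hsub _ _ ?_) bot_le) (hsub _ _ ?_) <;>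
      · intro t ht; simp only [Set.mem_insert_iff, Set.mem_singleton_iff] at ht ⊢; tauto
  have hace : Matrix.det ![a, c, e] ≠ 0 := by
    rw [det_ne_zero_iff_span]
    refine le_antisymm le_top ?_
    rw [← hgen 1 1 1 rfl, hF11, hF21, hF31]
    refine sup_le (sup_le (hsub _ _ ?_) (hsub _ _ ?_)) (hsub _ _ ?_) <;>
      · intro t ht; simp only [Set.mem_insert_iff, Set.mem_singleton_iff] at ht ⊢; tauto
  -- the triple ratio in terms of determinants
  have hT : tripleRatio 3 (1, 1, 1) F1 F2 F3 =
      (Matrix.det ![a, b, c] * Matrix.det ![a, e, f] * Matrix.det ![c, d, e]) /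
        (Matrix.det ![c, e, f] * Matrix.det ![a, c, d] * Matrix.det ![a, b, e]) := by
    show (wedgeDet 3 (1+1) 1 v1 v2 v3 * wedgeDet 3 1 (1-1) v1 v2 v3 *
        wedgeDet 3 (1-1) (1+1) v1 v2 v3) /
      (wedgeDet 3 (1-1) 1 v1 v2 v3 * wedgeDet 3 1 (1+1) v1 v2 v3 *
        wedgeDet 3 (1+1) (1-1) v1 v2 v3) = _
    norm_num [wedge21, wedge10, wedge02, wedge01, wedge12, wedge20]
    rfl
  -- the distinguished vector spanning F1 2 ⊓ F2 2
  set u : Fin 3 → ℂ := (Matrix.det ![a, b, d]) • c - (Matrix.det ![a, b, c]) • d with hu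
  have key : Matrix.det ![a, b, c] * Matrix.det ![a, e, f] * Matrix.det ![c, d, e] +
      Matrix.det ![c, e, f] * Matrix.det ![a, c, d] * Matrix.det ![a, b, e] =
      Matrix.det ![a, c, e] * Matrix.det ![e, f, u] := by
    rw [hu]
    simp only [Matrix.det_fin_three, det3, Matrix.cons_val_zero, Matrix.cons_val_one, Matrix.head_cons,
      Matrix.cons_val_two, Matrix.tail_cons, Pi.sub_apply, Pi.smul_apply, smul_eq_mul]
    ring
  have hDden : Matrix.det ![c, e, f] * Matrix.det ![a, c, d] * Matrix.det ![a, b, e] ≠ 0 :=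
    mul_ne_zero (mul_ne_zero hcef hacd) habe
  -- T = -1 ↔ det ![e, f, u] = 0
  have hTiff : tripleRatio 3 (1, 1, 1) F1 F2 F3 = -1 ↔ Matrix.det ![e, f, u] = 0 := by
    rw [hT, div_eq_iff hDden]
    constructor
    · intro h
      have h2 : Matrix.det ![a, c, e] * Matrix.det ![e, f, u] = 0 := by
        rw [← key]; linear_combination h
      rcases mul_eq_zero.mp h2 with h0 | h0
      · exact absurd h0 hace
      · exact h0
    · intro h
      have h2 : Matrix.det ![a, b, c] * Matrix.det ![a, e, f] * Matrix.det ![c, d, e] +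
          Matrix.det ![c, e, f] * Matrix.det ![a, c, d] * Matrix.det ![a, b, e] = 0 := by
        rw [key, h, mul_zero]
      linear_combination h2
  -- u is nonzero
  have hu_ne : u ≠ 0 := by
    intro h0
    have hz : Matrix.det ![a, c, u] = 0 := by
      rw [h0]; simp [Matrix.det_fin_three, det3]
    have hz2 : Matrix.det ![a, c, u] =
        -(Matrix.det ![a, b, c] * Matrix.det ![a, c, d]) := by
      rw [hu]
      simp only [Matrix.det_fin_three, det3, Matrix.cons_val_zero, Matrix.cons_val_one, Matrix.head_cons,
        Matrix.cons_val_two, Matrix.tail_cons, Pi.sub_apply, Pi.smul_apply, smul_eq_mul]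
      ring
    rw [hz2] at hz
    exact mul_ne_zero habc hacd (by linear_combination -hz)
  -- u belongs to F1 2 and F2 2
  have hu1 : u ∈ F1 2 := by
    rw [hF12, mem_span_pair_iff_det a b c u habc, hu]
    simp only [Matrix.det_fin_three, det3, Matrix.cons_val_zero, Matrix.cons_val_one, Matrix.head_cons,
      Matrix.cons_val_two, Matrix.tail_cons, Pi.sub_apply, Pi.smul_apply, smul_eq_mul]
    ring
  have hu2 : u ∈ F2 2 := by
    rw [hF22]
    refine Submodule.mem_span_pair.mpr ⟨Matrix.det ![a, b, d], -(Matrix.det ![a, b, c]), ?_⟩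
    rw [hu]
    funext j
    simp only [Pi.add_apply, Pi.sub_apply, Pi.smul_apply, smul_eq_mul, neg_mul, Pi.neg_apply]
    ring
  -- F1 2 ⊓ F2 2 = span {u}
  have hsup12 : F1 2 ⊔ F2 2 = ⊤ := by
    refine le_antisymm le_top ?_
    rw [← hgen 2 1 0 rfl, hF30]
    exact sup_le (sup_le le_sup_left (le_trans (h2.1 (by omega)) le_sup_right)) bot_le
  have hinf1 : finrank ℂ ↥(F1 2 ⊓ F2 2) = 1 := by
    have hh := Submodule.finrank_sup_add_finrank_inf_eq (F1 2) (F2 2)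
    rw [hsup12, finrank_top, h1.2 2 (by omega), h2.2 2 (by omega)] at hh
    have h3' : finrank ℂ (Fin 3 → ℂ) = 3 := by simp
    omega
  have hspanu : F1 2 ⊓ F2 2 = span ℂ {u} := by
    refine (Submodule.eq_of_le_of_finrank_le ?_ ?_).symm
    · rw [span_singleton_le_iff_mem]; exact ⟨hu1, hu2⟩
    · rw [hinf1, finrank_span_singleton hu_ne]
  -- membership of u in F3 2 via a determinant
  have hefc : Matrix.det ![e, f, c] ≠ 0 := by
    intro h0
    apply hcef
    have : Matrix.det ![c, e, f] = Matrix.det ![e, f, c] := by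
      simp only [Matrix.det_fin_three, det3, Matrix.cons_val_zero, Matrix.cons_val_one,
        Matrix.head_cons, Matrix.cons_val_two, Matrix.tail_cons]
      ring
    rw [this, h0]
  have hu3 : u ∈ F3 2 ↔ Matrix.det ![e, f, u] = 0 := by
    rw [hF32]
    exact mem_span_pair_iff_det e f c u hefc
  -- final assembly
  rw [hTiff, ← hu3, hspanu]
  constructor
  · intro hmem
    have heq : span ℂ {u} ⊓ F3 2 = span ℂ {u} :=
      inf_eq_left.mpr ((span_singleton_le_iff_mem u (F3 2)).mpr hmem)
    rw [heq, finrank_span_singleton hu_ne]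
  · intro hdim
    have hle : span ℂ {u} ⊓ F3 2 ≤ span ℂ {u} := inf_le_left
    have heq : span ℂ {u} ⊓ F3 2 = span ℂ {u} := by
      refine Submodule.eq_of_le_of_finrank_le hle ?_
      rw [hdim, finrank_span_singleton hu_ne]
    have : span ℂ {u} ≤ F3 2 := heq ▸ inf_le_right
    exact (span_singleton_le_iff_mem u (F3 2)).mp this
end
end

section
/- Let d ≥ 1 and let K be a compact set of nilpotent d×d complex matrices. Then there exists a constant C > 0 such that ‖exp(tX) − 1‖ ≤ C·t·‖exp(X) − 1‖ for every t ∈ [0,1] and every X ∈ K, where exp denotes the matrix exponential and ‖·‖ is the operator norm on d×d complex matrices. -/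
noncomputable section

/-- The operator norm of a `d × d` complex matrix, induced by the standard Hermitian norm
on `ℂ^d`. -/
noncomputable def opNorm (d : ℕ) (A : Matrix (Fin d) (Fin d) ℂ) : ℝ :=
  ‖LinearMap.toContinuousLinearMap (Matrix.toEuclideanLin A)‖

theorem exp_eq_sum_of_pow {𝔸 : Type*} [Ring 𝔸] [Algebra ℂ 𝔸] [TopologicalSpace 𝔸]
    [IsTopologicalRing 𝔸] [T2Space 𝔸] {A : 𝔸} {N : ℕ} (hA : A ^ N = 0) :
    NormedSpace.exp A = ∑ j ∈ Finset.range N, (j.factorial : ℂ)⁻¹ • A ^ j := by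
  rw [NormedSpace.exp_eq_tsum ℂ]
  refine tsum_eq_sum ?_
  intro j hj
  rw [pow_eq_zero_of_le (le_of_not_gt (fun h => hj (Finset.mem_range.mpr h))) hA, smul_zero]

theorem eq_zero_of_exp_eq_one {𝔸 : Type*} [Ring 𝔸] [Algebra ℂ 𝔸] [TopologicalSpace 𝔸]
    [IsTopologicalRing 𝔸] [T2Space 𝔸] :
    ∀ (n : ℕ) (A : 𝔸), A ^ n = 0 → NormedSpace.exp A = 1 → A = 0 := by
  intro n
  induction n with
  | zero =>
    intro A h0 _
    calc A = A * (A ^ 0) := by rw [pow_zero, mul_one]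
    _ = 0 := by rw [h0, mul_zero]
  | succ n ih =>
    intro A hA h1
    rcases Nat.eq_zero_or_pos n with hn | hn
    · subst hn; simpa using hA
    refine ih A ?_ h1
    obtain ⟨m, rfl⟩ : ∃ m, n = m + 1 := ⟨n - 1, (Nat.succ_pred_eq_of_pos hn).symm⟩
    have hsum : ∑ j ∈ Finset.range (m + 2), (j.factorial : ℂ)⁻¹ • A ^ j = 1 :=
      (exp_eq_sum_of_pow hA).symm.trans h1
    rw [Finset.sum_range_succ' (fun j => (j.factorial : ℂ)⁻¹ • A ^ j) (m + 1)] at hsum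
    simp only [Nat.factorial_zero, Nat.cast_one, inv_one, pow_zero, one_smul] at hsum
    have htail : ∑ j ∈ Finset.range (m + 1), ((j + 1).factorial : ℂ)⁻¹ • A ^ (j + 1) = 0 := by
      have := congrArg (fun z => z - 1) hsum
      simpa using this
    have hmul : A ^ m * ∑ j ∈ Finset.range (m + 1), ((j + 1).factorial : ℂ)⁻¹ • A ^ (j + 1)
        = A ^ (m + 1) := by
      rw [Finset.mul_sum]
      have : ∀ j ∈ Finset.range (m + 1),
          A ^ m * (((j + 1).factorial : ℂ)⁻¹ • A ^ (j + 1))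
            = if j = 0 then A ^ (m + 1) else 0 := by
        intro j hj
        rcases Nat.eq_zero_or_pos j with rfl | hj0
        · simp [mul_smul_comm, ← pow_add, pow_succ]
        · have : A ^ (m + (j + 1)) = 0 :=
            pow_eq_zero_of_le (by omega) hA
          rw [mul_smul_comm, ← pow_add, this, smul_zero, if_neg (by omega)]
      rw [Finset.sum_congr rfl this, Finset.sum_ite_eq' (Finset.range (m + 1)) 0
        (fun _ => A ^ (m + 1))]
      simp
    rw [htail, mul_zero] at hmul
    exact hmul.symm

theorem norm_exp_smul_sub_one_le {𝔸 : Type*} [NormedRing 𝔸] [NormedAlgebra ℂ 𝔸] {A : 𝔸} {N : ℕ}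
    (hA : A ^ N = 0) {t : ℝ} (ht0 : 0 ≤ t) (ht1 : t ≤ 1) :
    ‖NormedSpace.exp ((t : ℂ) • A) - 1‖ ≤ t * ‖A‖ * Real.exp ‖A‖ := by
  have hA' : ((t : ℂ) • A) ^ (N + 1) = 0 := by
    rw [smul_pow, pow_eq_zero_of_le (Nat.le_succ N) hA, smul_zero]
  rw [exp_eq_sum_of_pow hA',
    Finset.sum_range_succ' (fun j => (j.factorial : ℂ)⁻¹ • ((t : ℂ) • A) ^ j) N]
  simp only [Nat.factorial_zero, Nat.cast_one, inv_one, pow_zero, one_smul, add_sub_cancel_right]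
  calc ‖∑ j ∈ Finset.range N, ((j + 1).factorial : ℂ)⁻¹ • ((t : ℂ) • A) ^ (j + 1)‖
      ≤ ∑ j ∈ Finset.range N, ‖((j + 1).factorial : ℂ)⁻¹ • ((t : ℂ) • A) ^ (j + 1)‖ :=
        norm_sum_le _ _
    _ ≤ ∑ j ∈ Finset.range N, t * ‖A‖ * (‖A‖ ^ j / j.factorial) := by
        refine Finset.sum_le_sum fun j _ => ?_
        have e1 : ‖((j + 1).factorial : ℂ)⁻¹ • ((t : ℂ) • A) ^ (j + 1)‖
            ≤ ((j + 1).factorial : ℝ)⁻¹ * (t ^ (j + 1) * ‖A‖ ^ (j + 1)) := by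
          rw [norm_smul, norm_inv, Complex.norm_natCast]
          have h := norm_pow_le' ((t : ℂ) • A) (Nat.succ_pos j)
          rw [norm_smul, Complex.norm_real, Real.norm_eq_abs, abs_of_nonneg ht0, mul_pow] at h
          exact mul_le_mul_of_nonneg_left h (by positivity)
        have h1 : ((j + 1).factorial : ℝ)⁻¹ ≤ (j.factorial : ℝ)⁻¹ :=
          inv_anti₀ (by positivity)
            (by exact_mod_cast Nat.factorial_le (Nat.le_succ j))
        have h2 : t ^ (j + 1) ≤ t := by
          calc t ^ (j + 1) ≤ t ^ 1 := pow_le_pow_of_le_one ht0 ht1 (by omega)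
            _ = t := pow_one t
        have hAn : (0:ℝ) ≤ ‖A‖ ^ (j + 1) := by positivity
        have e2 : ((j + 1).factorial : ℝ)⁻¹ * (t ^ (j + 1) * ‖A‖ ^ (j + 1))
            ≤ (j.factorial : ℝ)⁻¹ * (t * ‖A‖ ^ (j + 1)) :=
          mul_le_mul h1 (mul_le_mul_of_nonneg_right h2 hAn) (by positivity) (by positivity)
        have e3 : (j.factorial : ℝ)⁻¹ * (t * ‖A‖ ^ (j + 1)) = t * ‖A‖ * (‖A‖ ^ j / j.factorial) := by
          rw [pow_succ]; ring
        linarith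
    _ = t * ‖A‖ * ∑ j ∈ Finset.range N, ‖A‖ ^ j / j.factorial := by
        rw [Finset.mul_sum]
    _ ≤ t * ‖A‖ * Real.exp ‖A‖ := by
        have h := Real.sum_le_exp_of_nonneg (norm_nonneg A) N
        exact mul_le_mul_of_nonneg_left h (by positivity)

theorem norm_exp_sub_one_sub_le {𝔸 : Type*} [NormedRing 𝔸] [NormedAlgebra ℂ 𝔸] {A : 𝔸} {N : ℕ}
    (hA : A ^ N = 0) :
    ‖NormedSpace.exp A - 1 - A‖ ≤ ‖A‖ ^ 2 * Real.exp ‖A‖ := by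
  have hA' : A ^ (N + 2) = 0 := pow_eq_zero_of_le (by omega) hA
  rw [exp_eq_sum_of_pow hA',
    Finset.sum_range_succ' (fun j => (j.factorial : ℂ)⁻¹ • A ^ j) (N + 1),
    Finset.sum_range_succ' (fun j => ((j + 1).factorial : ℂ)⁻¹ • A ^ (j + 1)) N]
  simp only [Nat.factorial_zero, Nat.factorial_one, Nat.cast_one, inv_one, pow_zero, pow_one,
    one_smul, zero_add]
  rw [add_sub_cancel_right, add_sub_cancel_right]
  calc ‖∑ j ∈ Finset.range N, ((j + 1 + 1).factorial : ℂ)⁻¹ • A ^ (j + 1 + 1)‖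
      ≤ ∑ j ∈ Finset.range N, ‖((j + 1 + 1).factorial : ℂ)⁻¹ • A ^ (j + 1 + 1)‖ :=
        norm_sum_le _ _
    _ ≤ ∑ j ∈ Finset.range N, ‖A‖ ^ 2 * (‖A‖ ^ j / j.factorial) := by
        refine Finset.sum_le_sum fun j _ => ?_
        have e1 : ‖((j + 1 + 1).factorial : ℂ)⁻¹ • A ^ (j + 1 + 1)‖
            ≤ ((j + 2).factorial : ℝ)⁻¹ * ‖A‖ ^ (j + 2) := by
          rw [norm_smul, norm_inv, Complex.norm_natCast]
          exact mul_le_mul_of_nonneg_left (norm_pow_le' _ (by omega)) (by positivity)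
        have h1 : ((j + 2).factorial : ℝ)⁻¹ ≤ (j.factorial : ℝ)⁻¹ :=
          inv_anti₀ (by positivity)
            (by exact_mod_cast Nat.factorial_le (by omega : j ≤ j + 2))
        have e2 : ((j + 2).factorial : ℝ)⁻¹ * ‖A‖ ^ (j + 2) ≤ (j.factorial : ℝ)⁻¹ * ‖A‖ ^ (j + 2) :=
          mul_le_mul_of_nonneg_right h1 (by positivity)
        have e3 : (j.factorial : ℝ)⁻¹ * ‖A‖ ^ (j + 2) = ‖A‖ ^ 2 * (‖A‖ ^ j / j.factorial) := by
          rw [show j + 2 = 2 + j by omega, pow_add]; ring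
        linarith
    _ = ‖A‖ ^ 2 * ∑ j ∈ Finset.range N, ‖A‖ ^ j / j.factorial := by rw [Finset.mul_sum]
    _ ≤ ‖A‖ ^ 2 * Real.exp ‖A‖ := by
        have h := Real.sum_le_exp_of_nonneg (norm_nonneg A) N
        exact mul_le_mul_of_nonneg_left h (by positivity)

abbrev Lk (d : ℕ) := EuclideanSpace ℂ (Fin d) →L[ℂ] EuclideanSpace ℂ (Fin d)

theorem toEuclideanCLM_exp (d : ℕ) (X : Matrix (Fin d) (Fin d) ℂ) :
    Matrix.toEuclideanCLM (𝕜 := ℂ) (n := Fin d) (NormedSpace.exp X)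
      = NormedSpace.exp (Matrix.toEuclideanCLM (𝕜 := ℂ) (n := Fin d) X) := by
  set Φ := Matrix.toEuclideanCLM (𝕜 := ℂ) (n := Fin d) with hΦ
  let ψ : Lk d →ₗ[ℂ] Matrix (Fin d) (Fin d) ℂ :=
    { toFun := Φ.symm, map_add' := fun x y => map_add _ x y,
      map_smul' := fun c x => map_smul _ c x }
  have hsum : Summable (fun n : ℕ => (n.factorial : ℂ)⁻¹ • (Φ X) ^ n) :=
    NormedSpace.expSeries_summable' (𝕂 := ℂ) (Φ X)
  have key : Φ.symm (NormedSpace.exp (Φ X)) = NormedSpace.exp X := by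
    have h1 : NormedSpace.exp (Φ X) = ∑' n : ℕ, (n.factorial : ℂ)⁻¹ • (Φ X) ^ n := by
      rw [NormedSpace.exp_eq_tsum ℂ]
    have h2 : ψ.toContinuousLinearMap (∑' n : ℕ, (n.factorial : ℂ)⁻¹ • (Φ X) ^ n)
        = ∑' n : ℕ, ψ.toContinuousLinearMap ((n.factorial : ℂ)⁻¹ • (Φ X) ^ n) :=
      ContinuousLinearMap.map_tsum _ hsum
    have h3 : ∀ n : ℕ, ψ.toContinuousLinearMap ((n.factorial : ℂ)⁻¹ • (Φ X) ^ n)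
        = (n.factorial : ℂ)⁻¹ • X ^ n := by
      intro n
      show Φ.symm ((n.factorial : ℂ)⁻¹ • (Φ X) ^ n) = _
      rw [map_smul, map_pow, StarAlgEquiv.symm_apply_apply]
    have h4 : Φ.symm (∑' n : ℕ, (n.factorial : ℂ)⁻¹ • (Φ X) ^ n)
        = ∑' n : ℕ, (n.factorial : ℂ)⁻¹ • X ^ n := by
      have h0 : Φ.symm (∑' n : ℕ, (n.factorial : ℂ)⁻¹ • (Φ X) ^ n)
          = ψ.toContinuousLinearMap (∑' n : ℕ, (n.factorial : ℂ)⁻¹ • (Φ X) ^ n) := rfl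
      rw [h0, h2]
      exact tsum_congr h3
    rw [h1, h4, NormedSpace.exp_eq_tsum ℂ]
  calc Φ (NormedSpace.exp X) = Φ (Φ.symm (NormedSpace.exp (Φ X))) := by rw [key]
    _ = NormedSpace.exp (Φ X) := Φ.apply_symm_apply _

theorem opNorm_eq (d : ℕ) (A : Matrix (Fin d) (Fin d) ℂ) :
    opNorm d A = ‖Matrix.toEuclideanCLM (𝕜 := ℂ) (n := Fin d) A‖ := rfl

set_option maxHeartbeats 1000000 in
theorem statement_15 (d : ℕ) (hd : 1 ≤ d) (K : Set (Matrix (Fin d) (Fin d) ℂ))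
    (hK : IsCompact K) (hnil : ∀ X ∈ K, IsNilpotent X) :
    ∃ C : ℝ, 0 < C ∧ ∀ t : ℝ, t ∈ Set.Icc (0 : ℝ) 1 → ∀ X ∈ K,
      opNorm d (NormedSpace.exp ((t : ℂ) • X) - 1) ≤
        C * t * opNorm d (NormedSpace.exp X - 1) := by
  classical
  set Φ := Matrix.toEuclideanCLM (𝕜 := ℂ) (n := Fin d) with hΦ
  let ΦL : Matrix (Fin d) (Fin d) ℂ →ₗ[ℂ] Lk d :=
    { toFun := Φ, map_add' := fun x y => map_add _ x y,
      map_smul' := fun c x => map_smul _ c x }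
  have hΦc : Continuous (⇑Φ) := ΦL.continuous_of_finiteDimensional
  set K' : Set (Lk d) := (⇑Φ) '' K with hK'def
  have hK'c : IsCompact K' := hK.image hΦc
  have hnil' : ∀ A ∈ K', IsNilpotent A := by
    rintro A ⟨X, hX, rfl⟩
    exact (hnil X hX).map Φ
  have key1 : ∀ A ∈ K', NormedSpace.exp A = 1 → A = 0 := by
    intro A hA h1
    obtain ⟨n, hn⟩ := hnil' A hA
    exact eq_zero_of_exp_eq_one n A hn h1
  obtain ⟨R₀, hR₀⟩ := hK'c.isBounded.exists_norm_le
  set R : ℝ := max R₀ 0 with hRdef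
  have hR : ∀ A ∈ K', ‖A‖ ≤ R := fun A hA => le_trans (hR₀ A hA) (le_max_left _ _)
  have hR0 : 0 ≤ R := le_max_right _ _
  set g : Lk d → ℝ := fun A => ‖NormedSpace.exp A - 1‖ with hgdef
  have hgc : Continuous g :=
    letI : NormedAlgebra ℚ (Lk d) := NormedAlgebra.restrictScalars ℚ ℂ (Lk d)
    continuous_norm.comp ((NormedSpace.exp_continuous (𝔸 := Lk d)).sub continuous_const)
  have hg0 : ∀ A, 0 ≤ g A := fun A => norm_nonneg _
  -- local bound near zero
  have hhalf : ∀ A ∈ K', ‖A‖ ≤ 1 / 6 → ‖A‖ ≤ 2 * g A := by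
    intro A hA h16
    obtain ⟨n, hn⟩ := hnil' A hA
    have h3 := norm_exp_sub_one_sub_le hn
    have hexp3 : Real.exp ‖A‖ ≤ 3 := by
      have h5 : Real.exp ‖A‖ ≤ Real.exp 1 :=
        Real.exp_le_exp.mpr (le_trans h16 (by norm_num))
      have h6 := Real.exp_one_lt_d9
      linarith
    have h7 : ‖A‖ ^ 2 * Real.exp ‖A‖ ≤ ‖A‖ * (1 / 2) := by
      nlinarith [norm_nonneg A, Real.exp_pos ‖A‖]
    have h4 : ‖A‖ ≤ g A + ‖NormedSpace.exp A - 1 - A‖ := by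
      have h := norm_sub_le (NormedSpace.exp A - 1) (NormedSpace.exp A - 1 - A)
      rw [sub_sub_cancel] at h
      exact h
    linarith
  -- global bound
  obtain ⟨C₁, hC₁2, hC₁⟩ : ∃ C₁ : ℝ, 2 ≤ C₁ ∧ ∀ A ∈ K', ‖A‖ ≤ C₁ * g A := by
    set S : Set (Lk d) := K' ∩ {A | 1 / 6 ≤ ‖A‖} with hSdef
    have hScpt : IsCompact S :=
      hK'c.inter_right (isClosed_le continuous_const continuous_norm)
    by_cases hS : S.Nonempty
    · obtain ⟨A₀, hA₀S, hA₀min'⟩ := hScpt.exists_isMinOn hS hgc.continuousOn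
      have hA₀min : ∀ A ∈ S, g A₀ ≤ g A := fun A hA => hA₀min' hA
      have hm : 0 < g A₀ := by
        rcases (norm_nonneg (NormedSpace.exp A₀ - 1)).lt_or_eq with h | h
        · exact h
        · exfalso
          have h1 : NormedSpace.exp A₀ - 1 = 0 := by
            have := norm_eq_zero.mp h.symm
            exact this
          have h2 : NormedSpace.exp A₀ = 1 := by
            rwa [sub_eq_zero] at h1
          have h3 : A₀ = 0 := key1 A₀ hA₀S.1 h2
          have h4 : (1 : ℝ) / 6 ≤ ‖A₀‖ := hA₀S.2
          rw [h3, norm_zero] at h4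
          linarith
      refine ⟨max 2 (R / g A₀), le_max_left _ _, ?_⟩
      intro A hA
      by_cases h16 : ‖A‖ ≤ 1 / 6
      · calc ‖A‖ ≤ 2 * g A := hhalf A hA h16
          _ ≤ max 2 (R / g A₀) * g A :=
            mul_le_mul_of_nonneg_right (le_max_left _ _) (hg0 A)
      · have hAS : A ∈ S := ⟨hA, le_of_not_ge h16⟩
        calc ‖A‖ ≤ R := hR A hA
          _ = (R / g A₀) * g A₀ := by field_simp
          _ ≤ (R / g A₀) * g A :=
            mul_le_mul_of_nonneg_left (hA₀min A hAS) (div_nonneg hR0 hm.le)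
          _ ≤ max 2 (R / g A₀) * g A :=
            mul_le_mul_of_nonneg_right (le_max_right _ _) (hg0 A)
    · refine ⟨2, le_refl _, ?_⟩
      intro A hA
      by_cases h16 : ‖A‖ ≤ 1 / 6
      · exact hhalf A hA h16
      · exact absurd ⟨A, ⟨hA, le_of_not_ge h16⟩⟩ hS
  refine ⟨C₁ * Real.exp R, by positivity, ?_⟩
  intro t ht X hX
  have hAK' : Φ X ∈ K' := ⟨X, hX, rfl⟩
  obtain ⟨n, hn⟩ := hnil' (Φ X) hAK'
  have e1 : opNorm d (NormedSpace.exp ((t : ℂ) • X) - 1)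
      = ‖NormedSpace.exp ((t : ℂ) • Φ X) - 1‖ := by
    rw [opNorm_eq]
    congr 1
    rw [map_sub, map_one, toEuclideanCLM_exp, map_smul]
  have e2 : opNorm d (NormedSpace.exp X - 1) = ‖NormedSpace.exp (Φ X) - 1‖ := by
    rw [opNorm_eq]
    congr 1
    rw [map_sub, map_one, toEuclideanCLM_exp]
  rw [e1, e2]
  have ht0 : 0 ≤ t := ht.1
  have ht1 : t ≤ 1 := ht.2
  calc ‖NormedSpace.exp ((t : ℂ) • Φ X) - 1‖
      ≤ t * ‖Φ X‖ * Real.exp ‖Φ X‖ := norm_exp_smul_sub_one_le hn ht0 ht1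
    _ ≤ (t * (C₁ * ‖NormedSpace.exp (Φ X) - 1‖)) * Real.exp R := by
        apply mul_le_mul
        · exact mul_le_mul_of_nonneg_left (hC₁ (Φ X) hAK') ht0
        · exact Real.exp_le_exp.mpr (hR (Φ X) hAK')
        · exact (Real.exp_pos _).le
        · exact mul_nonneg ht0 (mul_nonneg (by linarith) (norm_nonneg _))
    _ = C₁ * Real.exp R * t * ‖NormedSpace.exp (Φ X) - 1‖ := by ring
end
end

section
/- Let d ≥ 1, let ι be a countable linearly ordered set, and let M : ι → M_d(ℂ) be a family of matrices with det(M_i) = 1 for every i ∈ ι, such that the family (‖M_i − 1‖)_{i∈ι} is summable, where ‖·‖ is the operator norm. For a finite subset s ⊆ ι, let P(s) denote the product of the matrices M_i for i ∈ s, taken in increasing order of the indices. Then there exists a matrix Λ ∈ M_d(ℂ) with det(Λ) = 1 such that, for every sequence (s_n)_{n≥1} of finite subsets of ι with s_n ⊆ s_{n+1} for all n and ⋃_n s_n = ι, the sequence P(s_n) converges to Λ. In particular, the limit is independent of the choice of such an exhausting sequence. -/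
noncomputable section

open Filter

section AuxProd

variable {κ : Type*} {A : Type*} [NormedRing A]

def Qprod (N : κ → A) (l : List κ) : ℝ := (l.map (fun i => 1 + ‖N i - 1‖)).prod

lemma one_le_Qprod (N : κ → A) (l : List κ) : 1 ≤ Qprod N l := by
  induction l with
  | nil => simp [Qprod]
  | cons a l ih =>
    simp only [Qprod, List.map_cons, List.prod_cons] at *
    nlinarith [norm_nonneg (N a - 1)]

lemma Qprod_cons (N : κ → A) (a : κ) (l : List κ) :
    Qprod N (a :: l) = (1 + ‖N a - 1‖) * Qprod N l := by
  simp [Qprod]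

lemma Qprod_mono (N : κ → A) {m l : List κ} (h : m.Sublist l) : Qprod N m ≤ Qprod N l := by
  induction h with
  | slnil => exact le_refl _
  | @cons m l a h ih =>
    rw [Qprod_cons]
    nlinarith [one_le_Qprod N m, one_le_Qprod N l, norm_nonneg (N a - 1)]
  | @cons_cons m l a h ih =>
    rw [Qprod_cons, Qprod_cons]
    nlinarith [norm_nonneg (N a - 1), one_le_Qprod N m, one_le_Qprod N l]

lemma norm_listProd_le (hone : ‖(1 : A)‖ ≤ 1) (N : κ → A) (l : List κ) :
    ‖(l.map N).prod‖ ≤ Qprod N l := by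
  induction l with
  | nil => simpa [Qprod] using hone
  | cons a l ih =>
    simp only [List.map_cons, List.prod_cons]
    rw [Qprod_cons]
    have hNa : ‖N a‖ ≤ 1 + ‖N a - 1‖ := by
      calc ‖N a‖ = ‖1 + (N a - 1)‖ := by congr 1; abel
      _ ≤ ‖(1:A)‖ + ‖N a - 1‖ := norm_add_le _ _
      _ ≤ 1 + ‖N a - 1‖ := by linarith
    calc ‖N a * (l.map N).prod‖ ≤ ‖N a‖ * ‖(l.map N).prod‖ := norm_mul_le _ _
    _ ≤ (1 + ‖N a - 1‖) * Qprod N l := by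
        apply mul_le_mul hNa ih (norm_nonneg _) (by nlinarith [norm_nonneg (N a - 1)])

lemma norm_listProd_sub_le (hone : ‖(1 : A)‖ ≤ 1) (N : κ → A) {m l : List κ}
    (h : m.Sublist l) :
    ‖(l.map N).prod - (m.map N).prod‖ ≤ Qprod N l - Qprod N m := by
  induction h with
  | slnil => simp
  | @cons m l a h ih =>
    calc ‖((a :: l).map N).prod - (m.map N).prod‖
        ≤ ‖((a :: l).map N).prod - (l.map N).prod‖ + ‖(l.map N).prod - (m.map N).prod‖ := by
          simpa using norm_sub_le_norm_sub_add_norm_sub _ _ _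
    _ ≤ ‖N a - 1‖ * Qprod N l + (Qprod N l - Qprod N m) := by
        apply add_le_add ?_ ih
        have : ((a :: l).map N).prod - (l.map N).prod = (N a - 1) * (l.map N).prod := by
          simp [List.map_cons, List.prod_cons, sub_mul]
        rw [this]
        calc ‖(N a - 1) * (l.map N).prod‖ ≤ ‖N a - 1‖ * ‖(l.map N).prod‖ := norm_mul_le _ _
        _ ≤ ‖N a - 1‖ * Qprod N l :=
            mul_le_mul_of_nonneg_left (norm_listProd_le hone N l) (norm_nonneg _)
    _ = Qprod N (a :: l) - Qprod N m := by rw [Qprod_cons]; ring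
  | @cons_cons m l a h ih =>
    have : ((a :: l).map N).prod - ((a :: m).map N).prod
        = N a * ((l.map N).prod - (m.map N).prod) := by
      simp [List.map_cons, List.prod_cons, mul_sub]
    rw [this, Qprod_cons, Qprod_cons]
    have hNa : ‖N a‖ ≤ 1 + ‖N a - 1‖ := by
      calc ‖N a‖ = ‖1 + (N a - 1)‖ := by congr 1; abel
      _ ≤ ‖(1:A)‖ + ‖N a - 1‖ := norm_add_le _ _
      _ ≤ 1 + ‖N a - 1‖ := by linarith
    calc ‖N a * ((l.map N).prod - (m.map N).prod)‖
        ≤ ‖N a‖ * ‖(l.map N).prod - (m.map N).prod‖ := norm_mul_le _ _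
    _ ≤ (1 + ‖N a - 1‖) * (Qprod N l - Qprod N m) := by
        apply mul_le_mul hNa ih (norm_nonneg _) (by nlinarith [norm_nonneg (N a - 1)])
    _ = (1 + ‖N a - 1‖) * Qprod N l - (1 + ‖N a - 1‖) * Qprod N m := by ring

end AuxProd

section Main

open Filter Matrix

lemma opNorm_eq_toEuclideanCLM {d : ℕ} (A : Matrix (Fin d) (Fin d) ℂ) :
    opNorm d A = ‖Matrix.toEuclideanCLM (𝕜 := ℂ) A‖ := by
  rfl

set_option maxHeartbeats 1000000 in
set_option synthInstance.maxHeartbeats 200000 in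
theorem statement_18 (d : ℕ) (hd : 1 ≤ d) (ι : Type) [Countable ι] [LinearOrder ι]
    (M : ι → Matrix (Fin d) (Fin d) ℂ) (hdet : ∀ i, (M i).det = 1)
    (hsum : Summable fun i => opNorm d (M i - 1)) :
    ∃ Λ : Matrix (Fin d) (Fin d) ℂ, Λ.det = 1 ∧
      ∀ s : ℕ → Finset ι, (∀ n, s n ⊆ s (n + 1)) → (∀ i, ∃ n, i ∈ s n) →
        Filter.Tendsto (fun n => (((s n).sort (· ≤ ·)).map M).prod)
          Filter.atTop (nhds Λ) := by
  classical
  set E := EuclideanSpace ℂ (Fin d) →L[ℂ] EuclideanSpace ℂ (Fin d) with hE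
  set Φ : Matrix (Fin d) (Fin d) ℂ ≃⋆ₐ[ℂ] E := Matrix.toEuclideanCLM with hΦ
  set N : ι → E := fun i => Φ (M i) with hNdef
  have hone : ‖(1 : E)‖ ≤ 1 := ContinuousLinearMap.norm_id_le
  have hNsub : ∀ i, N i - 1 = Φ (M i - 1) := by
    intro i; rw [map_sub, _root_.map_one]
  have hsum' : Summable fun i => ‖N i - 1‖ := by
    refine hsum.congr fun i => ?_
    rw [hNsub i]
    exact opNorm_eq_toEuclideanCLM _
  -- Products over finsets
  set PF : Finset ι → E := fun s => ((s.sort (· ≤ ·)).map N).prod with hPF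
  set QF : Finset ι → ℝ := fun s => Qprod N (s.sort (· ≤ ·)) with hQFdef
  have hsub : ∀ {s t : Finset ι}, s ⊆ t →
      (s.sort (· ≤ ·)).Sublist (t.sort (· ≤ ·)) := by
    intro s t hst
    refine List.sublist_of_subperm_of_pairwise ?_ (Finset.pairwise_sort _ _)
      (Finset.pairwise_sort _ _)
    rw [← Multiset.coe_le, Finset.sort_eq, Finset.sort_eq]
    exact Finset.val_le_iff.mpr hst
  have hQF : ∀ s : Finset ι, QF s = ∏ i ∈ s, (1 + ‖N i - 1‖) := by
    intro s
    rw [Finset.prod_eq_multiset_prod, ← Finset.sort_eq s (· ≤ ·), Multiset.map_coe,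
      Multiset.prod_coe]
    rfl
  -- key estimates
  set T : ℝ := ∑' i, ‖N i - 1‖ with hT
  set C : ℝ := Real.exp T with hC
  have hCpos : 0 < C := Real.exp_pos _
  have hprod_le_exp : ∀ t : Finset ι,
      (∏ i ∈ t, (1 + ‖N i - 1‖)) ≤ Real.exp (∑ i ∈ t, ‖N i - 1‖) := by
    intro t
    rw [Real.exp_sum]
    refine Finset.prod_le_prod (fun i _ => by positivity) fun i _ => ?_
    linarith [Real.add_one_le_exp (‖N i - 1‖)]
  have hQFle : ∀ s : Finset ι, QF s ≤ C := by
    intro s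
    rw [hQF]
    refine le_trans (hprod_le_exp s) (Real.exp_le_exp.mpr ?_)
    exact hsum'.sum_le_tsum s (fun i _ => norm_nonneg _)
  -- Cauchy
  have hcauchy : CauchySeq PF := by
    rw [Metric.cauchySeq_iff']
    intro ε hε
    set δ : ℝ := Real.log (1 + ε / C) with hδ
    have hδpos : 0 < δ := Real.log_pos (by
      have : 0 < ε / C := by positivity
      linarith)
    obtain ⟨s₀, hs₀⟩ := hsum'.vanishing (Iio_mem_nhds hδpos)
    refine ⟨s₀, fun u hu => ?_⟩
    have hsl := hsub hu
    have hd1 : dist (PF u) (PF s₀) ≤ QF u - QF s₀ := by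
      rw [dist_eq_norm]
      exact norm_listProd_sub_le hone N hsl
    have hsplit : QF u = (∏ i ∈ u \ s₀, (1 + ‖N i - 1‖)) * QF s₀ := by
      rw [hQF, hQF, Finset.prod_sdiff hu]
    have hSlt : ∑ i ∈ u \ s₀, ‖N i - 1‖ < δ := hs₀ _ (Finset.sdiff_disjoint)
    have h2 : (∏ i ∈ u \ s₀, (1 + ‖N i - 1‖)) ≤ Real.exp (∑ i ∈ u \ s₀, ‖N i - 1‖) :=
      hprod_le_exp _
    have h3 : Real.exp (∑ i ∈ u \ s₀, ‖N i - 1‖) < Real.exp δ := Real.exp_lt_exp.mpr hSlt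
    have h4 : Real.exp δ = 1 + ε / C := Real.exp_log (by positivity)
    have h5 : QF s₀ ≤ C := hQFle s₀
    have h6 : 1 ≤ QF s₀ := one_le_Qprod N _
    calc dist (PF u) (PF s₀) ≤ QF u - QF s₀ := hd1
    _ = ((∏ i ∈ u \ s₀, (1 + ‖N i - 1‖)) - 1) * QF s₀ := by rw [hsplit]; ring
    _ < (ε / C) * QF s₀ := by
        apply mul_lt_mul_of_pos_right ?_ (by linarith)
        calc (∏ i ∈ u \ s₀, (1 + ‖N i - 1‖)) - 1
            < Real.exp δ - 1 := by linarith
        _ = ε / C := by rw [h4]; ring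
    _ ≤ (ε / C) * C := by
        apply mul_le_mul_of_nonneg_left h5 (by positivity)
    _ = ε := by field_simp
  obtain ⟨L, hL⟩ := cauchySeq_tendsto_of_complete hcauchy
  -- the linear equiv and continuity of the inverse
  set lin : Matrix (Fin d) (Fin d) ℂ ≃ₗ[ℂ] E :=
    Matrix.toEuclideanLin.trans LinearMap.toContinuousLinearMap with hlin
  have hΦlin : ∀ A, Φ A = lin A := by
    intro A
    apply ContinuousLinearMap.coe_injective
    rw [hΦ, Matrix.coe_toEuclideanCLM_eq_toEuclideanLin]
    rfl
  have hsymm : ∀ T : E, Φ.symm T = lin.symm T := by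
    intro T
    apply lin.injective
    rw [lin.apply_symm_apply, ← hΦlin, StarAlgEquiv.apply_symm_apply]
  have hcont : Continuous fun T : E => lin.symm T :=
    lin.symm.toLinearMap.continuous_of_finiteDimensional
  -- relation between PF and the matrix products
  have hkey : ∀ t : Finset ι, ((t.sort (· ≤ ·)).map M).prod = Φ.symm (PF t) := by
    intro t
    have : Φ (((t.sort (· ≤ ·)).map M).prod) = PF t := by
      rw [map_list_prod, hPF, List.map_map]
      rfl
    rw [← this, StarAlgEquiv.symm_apply_apply]
  set Λ : Matrix (Fin d) (Fin d) ℂ := Φ.symm L with hΛ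
  have hconv : ∀ s : ℕ → Finset ι, (∀ n, s n ⊆ s (n + 1)) → (∀ i, ∃ n, i ∈ s n) →
      Filter.Tendsto (fun n => (((s n).sort (· ≤ ·)).map M).prod)
        Filter.atTop (nhds Λ) := by
    intro s hmono hexh
    have hs : Tendsto s atTop atTop :=
      tendsto_atTop_finset_of_monotone (monotone_nat_of_le_succ hmono) hexh
    have h1 : Tendsto (fun n => PF (s n)) atTop (nhds L) := hL.comp hs
    have h2 : Tendsto (fun n => lin.symm (PF (s n))) atTop (nhds (lin.symm L)) :=
      (hcont.tendsto L).comp h1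
    have heq : (fun n => (((s n).sort (· ≤ ·)).map M).prod)
        = fun n => lin.symm (PF (s n)) := by
      funext n; rw [hkey, hsymm]
    rw [heq, hΛ, hsymm]
    exact h2
  refine ⟨Λ, ?_, hconv⟩
  -- determinant
  have hdetlist : ∀ l : List ι, ((l.map M).prod).det = 1 := by
    intro l
    induction l with
    | nil => simp
    | cons a l ih => simp [Matrix.det_mul, ih, hdet a]
  obtain ⟨s₁, hs₁mono, hs₁exh⟩ : ∃ s : ℕ → Finset ι,
      (∀ n, s n ⊆ s (n + 1)) ∧ (∀ i, ∃ n, i ∈ s n) := by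
    by_cases h : IsEmpty ι
    · exact ⟨fun _ => ∅, fun _ => subset_rfl, fun i => (h.elim i)⟩
    · rw [not_isEmpty_iff] at h
      obtain ⟨f, hf⟩ := exists_surjective_nat ι
      refine ⟨fun n => (Finset.range (n + 1)).image f, ?_, ?_⟩
      · intro n
        exact Finset.image_subset_image (Finset.range_subset_range.mpr (by omega))
      · intro i
        obtain ⟨n, rfl⟩ := hf i
        exact ⟨n, Finset.mem_image.mpr ⟨n, Finset.mem_range.mpr (by omega), rfl⟩⟩
  have h1 := hconv s₁ hs₁mono hs₁exh
  have h2 : Tendsto (fun n => ((((s₁ n).sort (· ≤ ·)).map M).prod).det)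
      atTop (nhds Λ.det) :=
    ((Continuous.matrix_det continuous_id).tendsto Λ).comp h1
  have h3 : (fun n => ((((s₁ n).sort (· ≤ ·)).map M).prod).det) = fun _ => (1 : ℂ) := by
    funext n; exact hdetlist _
  rw [h3] at h2
  exact tendsto_nhds_unique h2 tendsto_const_nhds

end Main
end
end

section
/- Let d ≥ 2. Let V be a d×d complex upper triangular matrix with V_{ii} = 1 for all i and V_{i,i+1} ≠ 0 for all i ∈ {1,…,d−1}, and let B be an invertible diagonal matrix with diagonal entries μ_1,…,μ_d. Set r := max_{1≤i≤d−1} |μ_{i+1}/μ_i| and ‖A‖₁ := Σ_{i,j} |A_{ij}|. Then: (a) r ≤ (min_{1≤i≤d−1} |V_{i,i+1}|)^{−1} · ‖B^{−1}VB − 1‖₁; and (b) if r ≤ 1, then ‖B^{−1}VB − 1‖₁ ≤ ‖V‖₁ · r. Consequently, for any sequence (B_n) of invertible diagonal matrices with diagonal entries μ_1(B_n),…,μ_d(B_n), one has B_n^{−1}VB_n → 1 as n → ∞ if and only if μ_{i+1}(B_n)/μ_i(B_n) → 0 for every i ∈ {1,…,d−1}. -/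
noncomputable section

open Filter

/-- The entrywise `ℓ¹`-norm of a `d × d` complex matrix: `‖A‖₁ = ∑_{i,j} |A i j|`. -/
noncomputable def norm1 (d : ℕ) (A : Matrix (Fin d) (Fin d) ℂ) : ℝ :=
  ∑ i : Fin d, ∑ j : Fin d, ‖A i j‖

lemma entry_le_norm1 (d : ℕ) (A : Matrix (Fin d) (Fin d) ℂ) (i0 j0 : Fin d) :
    ‖A i0 j0‖ ≤ norm1 d A := by
  unfold norm1
  calc ‖A i0 j0‖ ≤ ∑ j : Fin d, ‖A i0 j‖ :=
        Finset.single_le_sum (f := fun j => ‖A i0 j‖)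
          (fun j _ => norm_nonneg _) (Finset.mem_univ j0)
    _ ≤ ∑ i : Fin d, ∑ j : Fin d, ‖A i j‖ :=
        Finset.single_le_sum (f := fun i => ∑ j : Fin d, ‖A i j‖)
          (fun i _ => Finset.sum_nonneg fun j _ => norm_nonneg _)
          (Finset.mem_univ i0)

lemma conj_entry (d : ℕ) (μ : Fin d → ℂ) (hμ : ∀ i, μ i ≠ 0)
    (V : Matrix (Fin d) (Fin d) ℂ) (i j : Fin d) :
    ((Matrix.diagonal μ)⁻¹ * V * Matrix.diagonal μ) i j = (μ i)⁻¹ * V i j * μ j := by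
  have hD : (Matrix.diagonal μ)⁻¹ = Matrix.diagonal (fun i => (μ i)⁻¹) := by
    apply Matrix.inv_eq_left_inv
    rw [Matrix.diagonal_mul_diagonal]
    have : (fun i => (μ i)⁻¹ * μ i) = fun _ => (1 : ℂ) := by
      funext i; exact inv_mul_cancel₀ (hμ i)
    rw [this, Matrix.diagonal_one]
  rw [hD, Matrix.mul_diagonal, Matrix.diagonal_mul]

lemma M_entry (d : ℕ) (μ : Fin d → ℂ) (hμ : ∀ i, μ i ≠ 0)
    (V : Matrix (Fin d) (Fin d) ℂ) (i j : Fin d) :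
    ((Matrix.diagonal μ)⁻¹ * V * Matrix.diagonal μ - 1) i j
      = (μ i)⁻¹ * V i j * μ j - (if i = j then 1 else 0) := by
  rw [Matrix.sub_apply, conj_entry d μ hμ V i j, Matrix.one_apply]

lemma ratio_le (d : ℕ) (μ : Fin d → ℂ) (r : ℝ)
    (hub : ∀ i j : Fin d, (j : ℕ) = (i : ℕ) + 1 → ‖μ j / μ i‖ ≤ r)
    (hμ : ∀ i, μ i ≠ 0) (hr1 : r ≤ 1) :
    ∀ k : ℕ, ∀ i j : Fin d, (j : ℕ) = (i : ℕ) + k + 1 → ‖μ j / μ i‖ ≤ r := by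
  intro k
  induction k with
  | zero => intro i j h; exact hub i j h
  | succ k ih =>
    intro i j h
    have hm : (i : ℕ) + k + 1 < d := by have := j.isLt; omega
    set m : Fin d := ⟨(i : ℕ) + k + 1, hm⟩ with hmdef
    have hsplit : μ j / μ i = (μ j / μ m) * (μ m / μ i) := by
      rw [div_mul_div_cancel₀ (hμ m)]
    have h1 : ‖μ j / μ m‖ ≤ r := hub m j (by simp [hmdef]; omega)
    have h2 : ‖μ m / μ i‖ ≤ r := ih i m (by simp [hmdef])
    have hr0 : 0 ≤ r := le_trans (norm_nonneg _) h2
    calc ‖μ j / μ i‖ = ‖μ j / μ m‖ * ‖μ m / μ i‖ := by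
          rw [hsplit, norm_mul]
      _ ≤ r * 1 := mul_le_mul h1 (le_trans h2 hr1) (norm_nonneg _) hr0
      _ = r := mul_one r

lemma ratio_tendsto (d : ℕ) (μs : ℕ → Fin d → ℂ) (hμ : ∀ n i, μs n i ≠ 0)
    (h : ∀ i j : Fin d, (j : ℕ) = (i : ℕ) + 1 →
      Tendsto (fun n => μs n j / μs n i) atTop (nhds 0)) :
    ∀ k : ℕ, ∀ i j : Fin d, (j : ℕ) = (i : ℕ) + k + 1 →
      Tendsto (fun n => μs n j / μs n i) atTop (nhds 0) := by
  intro k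
  induction k with
  | zero => intro i j hij; exact h i j hij
  | succ k ih =>
    intro i j hij
    have hm : (i : ℕ) + k + 1 < d := by have := j.isLt; omega
    set m : Fin d := ⟨(i : ℕ) + k + 1, hm⟩ with hmdef
    have hsplit : (fun n => μs n j / μs n i)
        = fun n => (μs n j / μs n m) * (μs n m / μs n i) := by
      funext n
      rw [div_mul_div_cancel₀ (hμ n m)]
    rw [hsplit]
    have := (h m j (by simp [hmdef]; omega)).mul (ih i m (by simp [hmdef]))
    simpa using this

theorem statement_19 (d : ℕ) (hd : 2 ≤ d) (V : Matrix (Fin d) (Fin d) ℂ)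
    (hVlow : ∀ i j : Fin d, (j : ℕ) < (i : ℕ) → V i j = 0)
    (hVdiag : ∀ i : Fin d, V i i = 1)
    (hVsup : ∀ i j : Fin d, (j : ℕ) = (i : ℕ) + 1 → V i j ≠ 0)
    (μ : Fin d → ℂ) (hμ : ∀ i, μ i ≠ 0)
    (r c : ℝ)
    (hr : IsGreatest {x : ℝ | ∃ i j : Fin d, (j : ℕ) = (i : ℕ) + 1 ∧
      x = ‖μ j / μ i‖} r)
    (hc : IsLeast {x : ℝ | ∃ i j : Fin d, (j : ℕ) = (i : ℕ) + 1 ∧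
      x = ‖V i j‖} c) :
    -- (a)
    r ≤ c⁻¹ * norm1 d ((Matrix.diagonal μ)⁻¹ * V * Matrix.diagonal μ - 1) ∧
    -- (b)
    (r ≤ 1 → norm1 d ((Matrix.diagonal μ)⁻¹ * V * Matrix.diagonal μ - 1) ≤ norm1 d V * r) ∧
    -- consequence
    (∀ μs : ℕ → Fin d → ℂ, (∀ n i, μs n i ≠ 0) →
      (Filter.Tendsto (fun n => (Matrix.diagonal (μs n))⁻¹ * V * Matrix.diagonal (μs n))
          Filter.atTop (nhds 1) ↔
        ∀ i j : Fin d, (j : ℕ) = (i : ℕ) + 1 →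
          Filter.Tendsto (fun n => μs n j / μs n i) Filter.atTop (nhds 0))) := by
  set M := (Matrix.diagonal μ)⁻¹ * V * Matrix.diagonal μ - 1 with hM
  have hr0 : 0 ≤ r := by
    obtain ⟨i0, j0, hij0, hrval⟩ := hr.1
    exact hrval ▸ norm_nonneg _
  have hub : ∀ i j : Fin d, (j : ℕ) = (i : ℕ) + 1 → ‖μ j / μ i‖ ≤ r :=
    fun i j hij => hr.2 ⟨i, j, hij, rfl⟩
  refine ⟨?_, ?_, ?_⟩
  · -- (a)
    obtain ⟨⟨i0, j0, hij0, hrval⟩, _⟩ := hr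
    obtain ⟨⟨i1, j1, hij1, hcval⟩, hlb⟩ := hc
    have hc0 : 0 < c := by
      rw [hcval]; exact (norm_pos_iff.mpr (hVsup i1 j1 hij1))
    have hne : i0 ≠ j0 := by intro h; rw [h] at hij0; omega
    have hMentry : ‖M i0 j0‖ = ‖V i0 j0‖ * r := by
      rw [hM, M_entry d μ hμ V i0 j0, if_neg hne, sub_zero, hrval]
      rw [norm_mul, norm_mul, norm_inv, norm_div]
      ring
    have hterm : c * r ≤ ‖M i0 j0‖ := by
      rw [hMentry]
      exact mul_le_mul_of_nonneg_right (hlb ⟨i0, j0, hij0, rfl⟩) hr0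
    have hsum : ‖M i0 j0‖ ≤ norm1 d M := entry_le_norm1 d M i0 j0
    rw [inv_mul_eq_div, le_div_iff₀ hc0, mul_comm]
    exact le_trans hterm hsum
  · -- (b)
    intro hr1
    have key : ∀ i j : Fin d, ‖M i j‖ ≤ ‖V i j‖ * r := by
      intro i j
      rcases lt_trichotomy (j : ℕ) (i : ℕ) with h | h | h
      · have hne : i ≠ j := fun e => by omega
        rw [hM, M_entry d μ hμ V i j, if_neg hne, hVlow i j h, sub_zero]
        simp [mul_nonneg (norm_nonneg _) hr0]
      · have he : i = j := Fin.ext h.symm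
        subst he
        rw [hM, M_entry d μ hμ V i i, if_pos rfl, hVdiag i,
          mul_one, inv_mul_cancel₀ (hμ i), sub_self]
        simpa using hr0
      · have hne : i ≠ j := fun e => by omega
        rw [hM, M_entry d μ hμ V i j, if_neg hne, sub_zero, norm_mul, norm_mul, norm_inv]
        have hratio : ‖μ j / μ i‖ ≤ r :=
          ratio_le d μ r hub hμ hr1 ((j : ℕ) - (i : ℕ) - 1) i j (by omega)
        rw [norm_div] at hratio
        calc (‖μ i‖)⁻¹ * ‖V i j‖ * ‖μ j‖
              = ‖V i j‖ * (‖μ j‖ / ‖μ i‖) := by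
              rw [div_eq_mul_inv]; ring
          _ ≤ ‖V i j‖ * r :=
              mul_le_mul_of_nonneg_left hratio (norm_nonneg _)
    unfold norm1
    calc ∑ i : Fin d, ∑ j : Fin d, ‖M i j‖
        ≤ ∑ i : Fin d, ∑ j : Fin d, ‖V i j‖ * r :=
          Finset.sum_le_sum fun i _ => Finset.sum_le_sum fun j _ => key i j
      _ = (∑ i : Fin d, ∑ j : Fin d, ‖V i j‖) * r := by
          rw [Finset.sum_mul]
          exact Finset.sum_congr rfl fun i _ => (Finset.sum_mul _ _ _).symm
  · -- consequence
    intro μs hμs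
    have hentry : ∀ i j : Fin d,
        (fun n => ((Matrix.diagonal (μs n))⁻¹ * V * Matrix.diagonal (μs n)) i j)
          = fun n => (μs n i)⁻¹ * V i j * μs n j :=
      fun i j => funext fun n => conj_entry d (μs n) (hμs n) V i j
    constructor
    · intro hT i j hij
      have hne : i ≠ j := fun e => by rw [e] at hij; omega
      have h1 : Tendsto (fun n => ((Matrix.diagonal (μs n))⁻¹ * V * Matrix.diagonal (μs n)) i j)
          atTop (nhds ((1 : Matrix (Fin d) (Fin d) ℂ) i j)) :=
        tendsto_pi_nhds.1 (tendsto_pi_nhds.1 hT i) j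
      rw [hentry i j, Matrix.one_apply_ne hne] at h1
      have h2 := h1.const_mul ((V i j)⁻¹)
      rw [mul_zero] at h2
      have heq : (fun n => μs n j / μs n i)
          = fun n => (V i j)⁻¹ * ((μs n i)⁻¹ * V i j * μs n j) := by
        funext n
        rw [div_eq_mul_inv]
        field_simp [hVsup i j hij, hμs n i]
      rw [heq]
      exact h2
    · intro h
      apply tendsto_pi_nhds.2
      intro i
      apply tendsto_pi_nhds.2
      intro j
      show Tendsto (fun n => ((Matrix.diagonal (μs n))⁻¹ * V * Matrix.diagonal (μs n)) i j)
        atTop (nhds ((1 : Matrix (Fin d) (Fin d) ℂ) i j))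
      rw [hentry i j]
      rcases lt_trichotomy (j : ℕ) (i : ℕ) with hlt | heq | hgt
      · have hne : i ≠ j := fun e => by omega
        have : (fun n => (μs n i)⁻¹ * V i j * μs n j) = fun _ => (0 : ℂ) := by
          funext n; rw [hVlow i j hlt]; ring
        rw [this, Matrix.one_apply_ne hne]
        exact tendsto_const_nhds
      · have he : i = j := Fin.ext heq.symm
        subst he
        have : (fun n => (μs n i)⁻¹ * V i i * μs n i) = fun _ => (1 : ℂ) := by
          funext n; rw [hVdiag i, mul_one, inv_mul_cancel₀ (hμs n i)]
        rw [this, Matrix.one_apply_eq]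
        exact tendsto_const_nhds
      · have hne : i ≠ j := fun e => by omega
        have hrat := ratio_tendsto d μs hμs h ((j : ℕ) - (i : ℕ) - 1) i j (by omega)
        have h2 := hrat.const_mul (V i j)
        rw [mul_zero] at h2
        have : (fun n => (μs n i)⁻¹ * V i j * μs n j)
            = fun n => V i j * (μs n j / μs n i) := by
          funext n; rw [div_eq_mul_inv]; ring
        rw [this, Matrix.one_apply_ne hne]
        exact h2
end
end
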